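/- arXiv:0906.3416 — 4 statements merged into one kernel-verified Lean document; each statement's English description precedes it below -/
import Mathlib

section
/- Let (X, T, μ) be a measure-preserving dynamical system on a probability space and let f : X → [0,∞) be Borel measurable. For r > 0 set S_r = {x ∈ X : f(x) ≤ r} and let τ(x, S_r) = min{n ∈ ℕ⁺ : Tⁿ(x) ∈ S_r} denote the hitting time. Then for μ-almost every x ∈ X, liminf_{r→0} log τ(x, S_r) / (−log r) ≥ liminf_{r→0} log μ(S_r) / log r. -/
open Filter MeasureTheory Metric Set Topology ENNReal

/-- Hitting time of the set `S` for the orbit of `x` under `T`: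
`τ(x,S) = min {n ∈ ℕ⁺ : Tⁿ x ∈ S}`, equal to `⊤` if the orbit never enters `S`. -/
noncomputable def hitTime {X : Type*} (T : X → X) (S : Set X) (x : X) : ℕ∞ :=
  sInf ((fun n : ℕ => (n : ℕ∞)) '' {n : ℕ | 0 < n ∧ T^[n] x ∈ S})

lemma hitTime_one_le {X : Type*} (T : X → X) (S : Set X) (x : X) : 1 ≤ hitTime T S x := by
  refine le_sInf ?_
  rintro _ ⟨n, ⟨hn, _⟩, rfl⟩
  show (1 : ℕ∞) ≤ (n : ℕ∞)
  exact_mod_cast Nat.one_le_iff_ne_zero.2 hn.ne'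

lemma hitTime_anti {X : Type*} (T : X → X) {S S' : Set X} (h : S ⊆ S') (x : X) :
    hitTime T S' x ≤ hitTime T S x :=
  sInf_le_sInf (Set.image_mono fun n hn => ⟨hn.1, h hn.2⟩)

lemma hitTime_le_iff {X : Type*} {T : X → X} {S : Set X} {x : X} {N : ℕ} :
    hitTime T S x ≤ (N : ℕ∞) ↔ ∃ n, 0 < n ∧ n ≤ N ∧ T^[n] x ∈ S := by
  constructor
  · intro h
    by_contra hc
    push_neg at hc
    have h2 : ((N + 1 : ℕ) : ℕ∞) ≤ hitTime T S x := by
      refine le_sInf ?_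
      rintro _ ⟨n, ⟨hn, hmem⟩, rfl⟩
      have hNn : N < n := by
        by_contra hn'
        exact hc n hn (not_lt.1 hn') hmem
      show ((N + 1 : ℕ) : ℕ∞) ≤ (n : ℕ∞)
      exact_mod_cast hNn
    have h3 : ((N + 1 : ℕ) : ℕ∞) ≤ (N : ℕ∞) := h2.trans h
    have : N + 1 ≤ N := by exact_mod_cast h3
    omega
  · rintro ⟨n, h1, h2, h3⟩
    refine le_trans (sInf_le ⟨n, ⟨h1, h3⟩, rfl⟩) ?_
    show (n : ℕ∞) ≤ (N : ℕ∞)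
    exact_mod_cast h2

lemma measure_hitTime_le {X : Type*} [MeasurableSpace X] {μ : Measure X}
    {T : X → X} (hT : MeasurePreserving T μ μ) {S : Set X} (hS : MeasurableSet S) (N : ℕ) :
    μ {x | hitTime T S x ≤ (N : ℕ∞)} ≤ N * μ S := by
  have hsub : {x | hitTime T S x ≤ (N : ℕ∞)} ⊆ ⋃ n ∈ Finset.Icc 1 N, T^[n] ⁻¹' S := by
    intro x hx
    obtain ⟨n, h1, h2, h3⟩ := hitTime_le_iff.1 hx
    exact Set.mem_biUnion (Finset.mem_Icc.2 ⟨h1, h2⟩) h3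
  calc μ {x | hitTime T S x ≤ (N : ℕ∞)} ≤ ∑ n ∈ Finset.Icc 1 N, μ (T^[n] ⁻¹' S) :=
        (measure_mono hsub).trans (measure_biUnion_finset_le _ _)
    _ = ∑ _n ∈ Finset.Icc 1 N, μ S := by
        refine Finset.sum_congr rfl fun n _ => ?_
        exact (hT.iterate n).measure_preimage hS.nullMeasurableSet
    _ = N * μ S := by
        rw [Finset.sum_const, Nat.card_Icc]
        simp [nsmul_eq_mul]

/-- In a measure-preserving system on a probability space, for a measurable
`f : X → [0,∞)` with sublevel sets `S_r = {x : f x ≤ r}`, for `μ`-a.e. `x` one has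
`liminf_{r→0} log τ(x,S_r)/(-log r) ≥ liminf_{r→0} log μ(S_r)/log r`. -/
theorem hitting_liminf_ge_liminf_dim
    {X : Type*} [MeasurableSpace X] (μ : Measure X) [IsProbabilityMeasure μ]
    (T : X → X) (hT : MeasurePreserving T μ μ)
    (f : X → ℝ) (hf : Measurable f) (hf0 : ∀ x, 0 ≤ f x) :
    ∀ᵐ x ∂μ,
      liminf (fun r : ℝ =>
          ENNReal.log ((hitTime T {y | f y ≤ r} x : ℝ≥0∞)) / ((- Real.log r : ℝ) : EReal))
        (𝓝[>] 0)
      ≥ liminf (fun r : ℝ =>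
          ENNReal.log (μ {y | f y ≤ r}) / ((Real.log r : ℝ) : EReal)) (𝓝[>] 0) := by
  set L : EReal := liminf (fun r : ℝ =>
      ENNReal.log (μ {y | f y ≤ r}) / ((Real.log r : ℝ) : EReal)) (𝓝[>] 0) with hLdef
  have hSmeas : ∀ r : ℝ, MeasurableSet {y | f y ≤ r} := fun r => hf measurableSet_Iic
  have hSmono : ∀ {r r' : ℝ}, r ≤ r' → {y | f y ≤ r} ⊆ {y | f y ≤ r'} :=
    fun h y hy => le_trans hy h
  -- the liminf of the hitting-time exponent is always nonnegative
  have baseline : ∀ x : X, (0 : EReal) ≤ liminf (fun r : ℝ =>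
      ENNReal.log ((hitTime T {y | f y ≤ r} x : ℝ≥0∞)) / ((- Real.log r : ℝ) : EReal))
      (𝓝[>] 0) := by
    intro x
    refine le_liminf_of_le (by isBoundedDefault) ?_
    have hEv : ∀ᶠ r in 𝓝[>] (0:ℝ), r ∈ Set.Ioo (0:ℝ) 1 :=
      Ioo_mem_nhdsGT_of_mem ⟨le_rfl, one_pos⟩
    filter_upwards [hEv] with r hr
    refine EReal.div_nonneg ?_ ?_
    · rw [ENNReal.zero_le_log_iff]
      rw [← ENat.toENNReal_one, ENat.toENNReal_le]
      exact hitTime_one_le T _ x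
    · have : Real.log r ≤ 0 := Real.log_nonpos hr.1.le hr.2.le
      exact_mod_cast neg_nonneg.2 this
  -- main step : for each rational q with 0 < q < L, a.e. the liminf is ≥ q
  have key : ∀ q : ℚ, ∀ᵐ x ∂μ, (0 < (q:ℝ) ∧ ((q:ℝ) : EReal) < L) →
      ((q:ℝ) : EReal) ≤ liminf (fun r : ℝ =>
        ENNReal.log ((hitTime T {y | f y ≤ r} x : ℝ≥0∞)) / ((- Real.log r : ℝ) : EReal))
        (𝓝[>] 0) := by
    intro q
    by_cases hq : 0 < (q:ℝ) ∧ ((q:ℝ) : EReal) < L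
    swap
    · filter_upwards with x hx; exact absurd hx hq
    obtain ⟨hq0, hqL⟩ := hq
    -- pick a rational α with q < α < L, and set β between q and α
    obtain ⟨a, hqa, haL⟩ := EReal.exists_rat_btwn_of_lt hqL
    set α : ℝ := (a : ℝ) with hαdef
    have hqα : (q:ℝ) < α := by exact_mod_cast hqa
    set β : ℝ := ((q:ℝ) + α) / 2 with hβdef
    have hqβ : (q:ℝ) < β := by rw [hβdef]; linarith
    have hβα : β < α := by rw [hβdef]; linarith
    have hβ0 : 0 < β := lt_trans hq0 hqβ
    -- eventual measure bound : μ(S_r) ≤ r^α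
    have hEv1 : ∀ᶠ r in 𝓝[>] (0:ℝ),
        ((α : ℝ) : EReal) < ENNReal.log (μ {y | f y ≤ r}) / ((Real.log r : ℝ) : EReal) :=
      eventually_lt_of_lt_liminf haL
    have hEv2 : ∀ᶠ r in 𝓝[>] (0:ℝ), r ∈ Set.Ioo (0:ℝ) 1 :=
      Ioo_mem_nhdsGT_of_mem ⟨le_rfl, one_pos⟩
    obtain ⟨r1, hr1, hsub⟩ := mem_nhdsGT_iff_exists_Ioo_subset.1 (hEv1.and hEv2)
    have hr1pos : (0:ℝ) < r1 := hr1
    have hμ : ∀ r ∈ Set.Ioo (0:ℝ) r1, μ {y | f y ≤ r} ≤ ENNReal.ofReal (r ^ α) := by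
      intro r hr
      obtain ⟨hgr, hr01⟩ := hsub hr
      rcases eq_or_ne (μ {y | f y ≤ r}) 0 with h0 | hne
      · rw [h0]; exact zero_le
      · have hfin : μ {y | f y ≤ r} ≠ ⊤ := measure_ne_top μ _
        have htR : 0 < (μ {y | f y ≤ r}).toReal := ENNReal.toReal_pos hne hfin
        have hlog : ENNReal.log (μ {y | f y ≤ r})
            = ((Real.log (μ {y | f y ≤ r}).toReal : ℝ) : EReal) :=
          ENNReal.log_pos_real' htR
        rw [hlog, ← EReal.coe_div] at hgr
        have hgr' : α < Real.log (μ {y | f y ≤ r}).toReal / Real.log r := by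
          exact_mod_cast hgr
        have hlogr : Real.log r < 0 := Real.log_neg hr01.1 hr01.2
        have hlt : Real.log (μ {y | f y ≤ r}).toReal < α * Real.log r :=
          (lt_div_iff_of_neg hlogr).1 hgr'
        have hrpow : Real.log (r ^ α) = α * Real.log r := Real.log_rpow hr01.1 α
        have hlt2 : (μ {y | f y ≤ r}).toReal < r ^ α :=
          (Real.log_lt_log_iff htR (Real.rpow_pos_of_pos hr01.1 α)).1 (by
            rw [hrpow]; exact hlt)
        exact (ENNReal.le_ofReal_iff_toReal_le hfin
          (Real.rpow_pos_of_pos hr01.1 α).le).2 hlt2.le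
    -- Borel–Cantelli setup
    obtain ⟨k0, hk0⟩ := exists_nat_gt (-Real.log r1)
    set rk : ℕ → ℝ := fun k => Real.exp (-(k:ℝ)) with hrkdef
    set Nk : ℕ → ℕ := fun k => ⌈Real.exp ((k:ℝ) * β)⌉₊ with hNkdef
    have hrk_mem : ∀ k : ℕ, rk (k + k0 + 1) ∈ Set.Ioo (0:ℝ) r1 := by
      intro k
      refine ⟨Real.exp_pos _, ?_⟩
      have h1 : -((k + k0 + 1 : ℕ) : ℝ) < Real.log r1 := by
        push_cast
        nlinarith [hk0]
      calc rk (k + k0 + 1) < Real.exp (Real.log r1) := Real.exp_lt_exp.2 h1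
        _ = r1 := Real.exp_log hr1pos
    set c : ℝ := Real.exp (-(α - β)) with hcdef
    have hc0 : 0 < c := Real.exp_pos _
    have hc1 : c < 1 := by
      rw [hcdef]
      exact Real.exp_lt_one_iff.2 (by linarith)
    set Bad : ℕ → Set X := fun k =>
      {x | hitTime T {y | f y ≤ rk (k + k0 + 1)} x ≤ ((Nk (k + k0 + 1) : ℕ) : ℕ∞)} with hBaddef
    have hBadmeas : ∀ k : ℕ, μ (Bad k) ≤ ENNReal.ofReal (2 * c ^ (k + k0 + 1)) := by
      intro k
      set m : ℕ := k + k0 + 1 with hmdef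
      have h1 : μ (Bad k) ≤ (Nk m : ℝ≥0∞) * μ {y | f y ≤ rk m} :=
        measure_hitTime_le hT (hSmeas _) (Nk m)
      have h2 : (Nk m : ℝ≥0∞) ≤ ENNReal.ofReal (2 * Real.exp ((m:ℝ) * β)) := by
        rw [← ENNReal.ofReal_natCast]
        refine ENNReal.ofReal_le_ofReal ?_
        have hceil : (Nk m : ℝ) ≤ Real.exp ((m:ℝ) * β) + 1 :=
          (Nat.ceil_lt_add_one (Real.exp_pos _).le).le
        have hexp1 : (1:ℝ) ≤ Real.exp ((m:ℝ) * β) :=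
          Real.one_le_exp (by positivity)
        linarith
      have h3 : μ {y | f y ≤ rk m} ≤ ENNReal.ofReal (Real.exp (-(m:ℝ) * α)) := by
        have heq : rk m ^ α = Real.exp (-(m:ℝ) * α) := by
          show Real.exp (-(m:ℝ)) ^ α = _
          rw [Real.rpow_def_of_pos (Real.exp_pos _), Real.log_exp]
        calc μ {y | f y ≤ rk m} ≤ ENNReal.ofReal (rk m ^ α) := hμ (rk m) (hrk_mem k)
          _ = ENNReal.ofReal (Real.exp (-(m:ℝ) * α)) := by rw [heq]
      calc μ (Bad k) ≤ (Nk m : ℝ≥0∞) * μ {y | f y ≤ rk m} := h1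
        _ ≤ ENNReal.ofReal (2 * Real.exp ((m:ℝ) * β)) * ENNReal.ofReal (Real.exp (-(m:ℝ) * α)) :=
            mul_le_mul' h2 h3
        _ = ENNReal.ofReal (2 * c ^ m) := by
            rw [← ENNReal.ofReal_mul (by positivity)]
            congr 1
            rw [hcdef, ← Real.exp_nat_mul, mul_assoc, ← Real.exp_add]
            ring_nf
    have hsum : (∑' k : ℕ, μ (Bad k)) ≠ ∞ := by
      have hsummable : Summable (fun k : ℕ => 2 * c ^ k) :=
        (summable_geometric_of_lt_one hc0.le hc1).mul_left 2
      have hb : (∑' k : ℕ, μ (Bad k)) ≤ ∑' k : ℕ, ENNReal.ofReal (2 * c ^ k) := by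
        refine le_trans (ENNReal.tsum_le_tsum fun k => hBadmeas k) ?_
        refine ENNReal.tsum_le_tsum fun k => ENNReal.ofReal_le_ofReal ?_
        have : c ^ (k + k0 + 1) ≤ c ^ k :=
          pow_le_pow_of_le_one hc0.le hc1.le (by omega)
        linarith
      have heq : (∑' k : ℕ, ENNReal.ofReal (2 * c ^ k))
          = ENNReal.ofReal (∑' k : ℕ, 2 * c ^ k) :=
        (ENNReal.ofReal_tsum_of_nonneg (fun k => by positivity) hsummable).symm
      exact ne_top_of_le_ne_top (by rw [heq]; exact ENNReal.ofReal_ne_top) hb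
    have hBC : ∀ᵐ x ∂μ, ∀ᶠ k in atTop, x ∉ Bad k := ae_eventually_notMem hsum
    filter_upwards [hBC] with x hx _
    -- from the Borel–Cantelli conclusion, get a bound for all large k
    obtain ⟨K0, hK0⟩ := eventually_atTop.1 hx
    obtain ⟨K2, hK2⟩ := exists_nat_gt ((q:ℝ) / (β - (q:ℝ)))
    set K : ℕ := max (K0 + k0 + 1) K2 + 1 with hKdef
    have hgood : ∀ k : ℕ, K ≤ k → ((Nk k : ℕ) : ℕ∞) < hitTime T {y | f y ≤ rk k} x := by
      intro k hk
      have hk' : K0 + k0 + 1 ≤ k := le_trans (le_trans (le_max_left _ _) (Nat.le_succ _)) hk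
      have : x ∉ Bad (k - k0 - 1) := hK0 _ (by omega)
      rw [hBaddef] at this
      simp only [Set.mem_setOf_eq, not_le] at this
      have hkk : k - k0 - 1 + k0 + 1 = k := by omega
      rwa [hkk] at this
    have hKq : ∀ k : ℕ, K ≤ k → (q:ℝ) * ((k:ℝ) + 1) ≤ β * (k:ℝ) := by
      intro k hk
      have hkK2' : K2 ≤ k := le_trans (le_trans (le_max_right _ _) (Nat.le_succ _)) hk
      have hkK2 : (K2 : ℝ) ≤ (k:ℝ) := by exact_mod_cast hkK2'
      have h1 : (q:ℝ) / (β - (q:ℝ)) < (k:ℝ) := lt_of_lt_of_le hK2 hkK2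
      have h2 : (q:ℝ) < (k:ℝ) * (β - (q:ℝ)) := by
        rw [div_lt_iff₀ (by linarith)] at h1
        linarith
      nlinarith
    -- conclusion : eventually in r, the quotient is ≥ q
    refine le_liminf_of_le (by isBoundedDefault) ?_
    have hEv3 : ∀ᶠ r in 𝓝[>] (0:ℝ), r ∈ Set.Ioo (0:ℝ) (Real.exp (-((K:ℝ) + 1))) :=
      Ioo_mem_nhdsGT_of_mem ⟨le_rfl, Real.exp_pos _⟩
    filter_upwards [hEv3] with r hr
    set k : ℕ := ⌊-Real.log r⌋₊ with hkdef
    have hlogr : -Real.log r > (K:ℝ) + 1 := by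
      have h := Real.log_lt_log hr.1 hr.2
      rw [Real.log_exp] at h
      linarith
    have hkK : K + 1 ≤ k := by
      rw [hkdef]
      exact Nat.le_floor (by exact_mod_cast hlogr.le)
    have hkfloor : (k:ℝ) ≤ -Real.log r := Nat.floor_le (by linarith)
    have hkfloor2 : -Real.log r < (k:ℝ) + 1 := Nat.lt_floor_add_one _
    have hrle : r ≤ rk k := by
      rw [hrkdef, ← Real.exp_log hr.1]
      exact Real.exp_le_exp.2 (by linarith)
    have hτ : ((Nk k : ℕ) : ℕ∞) < hitTime T {y | f y ≤ r} x :=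
      lt_of_lt_of_le (hgood k (by omega)) (hitTime_anti T (hSmono hrle) x)
    -- numerator bound
    have hnum : (((k:ℝ) * β : ℝ) : EReal)
        ≤ ENNReal.log ((hitTime T {y | f y ≤ r} x : ℝ≥0∞)) := by
      have h1 : ENNReal.ofReal (Real.exp ((k:ℝ) * β))
          ≤ ((hitTime T {y | f y ≤ r} x : ℕ∞) : ℝ≥0∞) := by
        calc ENNReal.ofReal (Real.exp ((k:ℝ) * β)) ≤ ((Nk k : ℕ) : ℝ≥0∞) := by
              rw [← ENNReal.ofReal_natCast]
              exact ENNReal.ofReal_le_ofReal (Nat.le_ceil _)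
          _ = (((Nk k : ℕ) : ℕ∞) : ℝ≥0∞) := by
              rw [ENat.toENNReal_coe]
          _ ≤ _ := ENat.toENNReal_le.2 hτ.le
      calc (((k:ℝ) * β : ℝ) : EReal)
          = ENNReal.log (ENNReal.ofReal (Real.exp ((k:ℝ) * β))) := by
            rw [ENNReal.log_ofReal_of_pos (Real.exp_pos _), Real.log_exp]
        _ ≤ _ := ENNReal.log_monotone h1
    -- denominator facts
    have hbpos : (0:ℝ) < -Real.log r := by linarith
    rw [EReal.le_div_iff_mul_le (by exact_mod_cast hbpos) (by simp)]
    calc ((q:ℝ) : EReal) * ((-Real.log r : ℝ) : EReal)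
        = (((q:ℝ) * (-Real.log r) : ℝ) : EReal) := by rw [EReal.coe_mul]
      _ ≤ (((k:ℝ) * β : ℝ) : EReal) := by
          apply EReal.coe_le_coe_iff.2
          have hq1 : (q:ℝ) * (-Real.log r) ≤ (q:ℝ) * ((k:ℝ) + 1) :=
            mul_le_mul_of_nonneg_left hkfloor2.le hq0.le
          have hq2 := hKq k (by omega)
          nlinarith
      _ ≤ _ := hnum
  -- combine over all rationals
  filter_upwards [ae_all_iff.2 key] with x hx
  rcases le_or_gt L 0 with hL0 | hL0
  · exact le_trans hL0 (baseline x)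
  by_contra hcon
  push_neg at hcon
  obtain ⟨p, h1, h2⟩ := EReal.exists_rat_btwn_of_lt hcon
  have hp0 : 0 < (p:ℝ) := by
    have h3 := lt_of_le_of_lt (baseline x) h1
    exact_mod_cast h3
  exact absurd (hx p ⟨hp0, h2⟩) (not_le.2 h1)
end

section
/- Let (X, d) be a metric space, μ a Borel probability measure, and T : X → X a measure-preserving map with superpolynomial decay of correlations with respect to Lipschitz observables: there is Φ : ℕ → [0,∞) with n^α Φ(n) → 0 for every α > 0 such that |∫ φ∘Tⁿ · ψ dμ − ∫φ dμ ∫ψ dμ| ≤ ‖φ‖·‖ψ‖·Φ(n) for all Lipschitz φ, ψ : X → ℝ, where ‖·‖ denotes the Lipschitz norm (sup norm plus best Lipschitz constant). Let f : X → [0,∞) be ℓ-Lipschitz, let (r_n) be a strictly decreasing sequence of positive reals tending to 0, set S_{r_n} = {x : f(x) ≤ r_n} and A_k = T^{−k}(S_{r_k}). Then there exists N such that for all k > j > N: μ(A_k ∩ A_j) ≤ μ(S_{r_{k−1}})·μ(S_{r_{j−1}}) + 4ℓ²·Φ(k−j) / ((r_{k−1}−r_k)(r_{j−1}−r_j)).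 -/
open Filter MeasureTheory Metric Set Topology ENNReal NNReal

section Cutoff

variable {X : Type*} [MetricSpace X]

/-- Piecewise-linear cutoff: equals 1 on `{f ≤ a}`, vanishes outside `{f ≤ b}`. -/
noncomputable def slCutoff (f : X → ℝ) (a b : ℝ) (x : X) : ℝ :=
  max 0 (min 1 ((b - f x) / (b - a)))

lemma slCutoff_nonneg (f : X → ℝ) (a b : ℝ) (x : X) : 0 ≤ slCutoff f a b x :=
  le_max_left _ _

lemma slCutoff_le_one (f : X → ℝ) (a b : ℝ) (x : X) : slCutoff f a b x ≤ 1 :=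
  max_le zero_le_one (min_le_left _ _)

lemma slCutoff_abs_le_one (f : X → ℝ) (a b : ℝ) (x : X) : |slCutoff f a b x| ≤ 1 := by
  rw [abs_le]
  exact ⟨by linarith [slCutoff_nonneg f a b x], slCutoff_le_one f a b x⟩

lemma slCutoff_eq_one (f : X → ℝ) {a b : ℝ} (hab : a < b) {x : X} (hx : f x ≤ a) :
    slCutoff f a b x = 1 := by
  have h1 : (1 : ℝ) ≤ (b - f x) / (b - a) :=
    (one_le_div (by linarith)).mpr (by linarith)
  rw [slCutoff, min_eq_left h1, max_eq_right zero_le_one]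

lemma slCutoff_le_indicator (f : X → ℝ) {a b : ℝ} (hab : a < b) (x : X) :
    slCutoff f a b x ≤ Set.indicator {y | f y ≤ b} (1 : X → ℝ) x := by
  by_cases hx : x ∈ {y | f y ≤ b}
  · rw [Set.indicator_of_mem hx, Pi.one_apply]
    exact slCutoff_le_one f a b x
  · rw [Set.indicator_of_notMem hx]
    have hfx : b < f x := not_le.mp hx
    have h2 : (b - f x) / (b - a) ≤ 0 :=
      div_nonpos_of_nonpos_of_nonneg (by linarith) (by linarith)
    exact max_le le_rfl ((min_le_right _ _).trans h2)

lemma slCutoff_lipschitz {ℓ : ℝ≥0} {f : X → ℝ} (hf : LipschitzWith ℓ f)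
    {a b : ℝ} (hab : a < b) :
    LipschitzWith (ℓ * ((b - a)⁻¹).toNNReal) (slCutoff f a b) := by
  apply LipschitzWith.of_dist_le_mul
  intro x y
  have hba : (0 : ℝ) < b - a := by linarith
  rw [Real.dist_eq]
  set u := (b - f x) / (b - a) with hu
  set v := (b - f y) / (b - a) with hv
  have h1 : |slCutoff f a b x - slCutoff f a b y| ≤ |u - v| := by
    calc |max 0 (min 1 u) - max 0 (min 1 v)|
        = |max (min 1 u) 0 - max (min 1 v) 0| := by rw [max_comm, max_comm (min 1 v)]
      _ ≤ |min 1 u - min 1 v| := abs_max_sub_max_le_abs _ _ _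
      _ ≤ max |1 - (1 : ℝ)| |u - v| := abs_min_sub_min_le_max _ _ _ _
      _ = |u - v| := by simp
  have h2 : |u - v| = |f y - f x| / (b - a) := by
    rw [hu, hv, div_sub_div_same, abs_div, abs_of_pos hba]
    congr 1
    ring_nf
  have h3 : |f y - f x| ≤ (ℓ : ℝ) * dist x y := by
    have := hf.dist_le_mul y x
    rwa [Real.dist_eq, dist_comm y x] at this
  have hcoe : ((ℓ * ((b - a)⁻¹).toNNReal : ℝ≥0) : ℝ) = (ℓ : ℝ) * (b - a)⁻¹ := by
    rw [NNReal.coe_mul, Real.coe_toNNReal _ (inv_nonneg.mpr hba.le)]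
  rw [hcoe]
  refine h1.trans ?_
  rw [h2, div_le_iff₀ hba]
  have h4 : (ℓ : ℝ) * (b - a)⁻¹ * dist x y * (b - a) = (ℓ : ℝ) * dist x y := by
    field_simp
  rw [h4]
  exact h3

end Cutoff

/-- Lemma on intersections of preimages of sublevel sets: if the system has
(superpolynomial) decay of correlations with rate `Φ` with respect to Lipschitz observables,
`f` is `ℓ`-Lipschitz with sublevel sets `S_r = {x : f x ≤ r}`, `(r n)` is a strictly
decreasing sequence of positive reals tending to `0`, and `A k = T⁻ᵏ(S_{r k})`, then
there is `N` such that for all `k > j > N`,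
`μ(A k ∩ A j) ≤ μ(S_{r (k-1)}) μ(S_{r (j-1)}) + 4 ℓ² Φ(k-j) / ((r(k-1) - r k)(r(j-1) - r j))`. -/
theorem intersection_of_sublevel_preimages
    {X : Type*} [MetricSpace X] [MeasurableSpace X] [BorelSpace X]
    (μ : Measure X) [IsProbabilityMeasure μ]
    (T : X → X) (hT : MeasurePreserving T μ μ)
    (Φ : ℕ → ℝ) (hΦ0 : ∀ n, 0 ≤ Φ n)
    (hΦ : ∀ α : ℝ, 0 < α → Tendsto (fun n : ℕ => (n : ℝ) ^ α * Φ n) atTop (𝓝 0))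
    (hmix : ∀ (φ ψ : X → ℝ) (Kφ Kψ : ℝ≥0) (Cφ Cψ : ℝ),
      LipschitzWith Kφ φ → LipschitzWith Kψ ψ →
      (∀ x, |φ x| ≤ Cφ) → (∀ x, |ψ x| ≤ Cψ) → ∀ n : ℕ,
      |(∫ x, φ (T^[n] x) * ψ x ∂μ) - (∫ x, φ x ∂μ) * ∫ x, ψ x ∂μ|
        ≤ (Cφ + Kφ) * (Cψ + Kψ) * Φ n)
    (ℓ : ℝ≥0) (f : X → ℝ) (hf : LipschitzWith ℓ f) (hf0 : ∀ x, 0 ≤ f x)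
    (r : ℕ → ℝ) (hrpos : ∀ n, 0 < r n) (hrdec : StrictAnti r)
    (hrlim : Tendsto r atTop (𝓝 (0 : ℝ))) :
    ∃ N : ℕ, ∀ j k : ℕ, N < j → j < k →
      (μ ((T^[k] ⁻¹' {x | f x ≤ r k}) ∩ (T^[j] ⁻¹' {x | f x ≤ r j}))).toReal
        ≤ (μ {x | f x ≤ r (k - 1)}).toReal * (μ {x | f x ≤ r (j - 1)}).toReal
          + 4 * (ℓ : ℝ) ^ 2 * Φ (k - j) / ((r (k - 1) - r k) * (r (j - 1) - r j)) := by
  have hne : Nonempty X := by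
    by_contra h
    rw [not_nonempty_iff] at h
    have h1 : μ Set.univ = 1 := measure_univ
    rw [Set.univ_eq_empty_iff.mpr h, measure_empty] at h1
    exact zero_ne_one h1
  have hfc : Continuous f := hf.continuous
  have hS : ∀ m : ℕ, MeasurableSet {x | f x ≤ r m} := fun m =>
    measurableSet_le hfc.measurable measurable_const
  have hTm : ∀ m : ℕ, Measurable (T^[m]) := fun m => hT.measurable.iterate m
  rcases eq_or_lt_of_le (zero_le : (0 : ℝ≥0) ≤ ℓ) with hℓ | hℓpos
  · -- degenerate case ℓ = 0 : f is constant
    obtain ⟨x₀⟩ := hne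
    have hconst : ∀ x, f x = f x₀ := by
      intro x
      have h := hf.dist_le_mul x x₀
      rw [← hℓ] at h
      simp only [NNReal.coe_zero, zero_mul] at h
      exact dist_eq_zero.mp (le_antisymm h dist_nonneg)
    have hzero : 4 * (ℓ : ℝ) ^ 2 = 0 := by rw [← hℓ]; norm_num
    refine ⟨0, ?_⟩
    intro j k hj hk
    rw [hzero, zero_mul, zero_div]
    by_cases hc : f x₀ ≤ r k
    · have hall : ∀ m : ℕ, r k ≤ r m → {x | f x ≤ r m} = Set.univ := by
        intro m hm
        ext x
        simp [hconst x]
        linarith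
      have hkj : r k ≤ r j := (hrdec hk).le
      have hk1 : r k ≤ r (k - 1) := (hrdec.le_iff_ge.mpr (by omega))
      have hj1 : r k ≤ r (j - 1) := hkj.trans (hrdec.le_iff_ge.mpr (by omega))
      rw [hall k le_rfl, hall j hkj, hall (k - 1) hk1, hall (j - 1) hj1]
      simp
    · have hempty : {x | f x ≤ r k} = (∅ : Set X) := by
        ext x
        simp [hconst x, hc]
      rw [hempty]
      simp only [Set.preimage_empty, Set.empty_inter, measure_empty, ENNReal.toReal_zero,
        add_zero]
      positivity
  · -- main case ℓ > 0
    have hΔtend : Tendsto (fun m : ℕ => r m - r (m + 1)) atTop (𝓝 0) := by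
      have h := hrlim.sub (hrlim.comp (tendsto_add_atTop_nat 1))
      simpa using h
    have hev : ∀ᶠ m in atTop, r m - r (m + 1) ≤ (ℓ : ℝ) :=
      hΔtend.eventually_le_const (by exact_mod_cast hℓpos)
    obtain ⟨N, hN⟩ := eventually_atTop.mp hev
    refine ⟨N, ?_⟩
    intro j k hj hk
    have hkk : k - 1 + 1 = k := by omega
    have hjj : j - 1 + 1 = j := by omega
    have hΔk : r (k - 1) - r k ≤ (ℓ : ℝ) := by
      have h := hN (k - 1) (by omega); rwa [hkk] at h
    have hΔj : r (j - 1) - r j ≤ (ℓ : ℝ) := by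
      have h := hN (j - 1) (by omega); rwa [hjj] at h
    have habk : r k < r (k - 1) := hrdec (by omega)
    have habj : r j < r (j - 1) := hrdec (by omega)
    have hΔkpos : (0 : ℝ) < r (k - 1) - r k := by linarith
    have hΔjpos : (0 : ℝ) < r (j - 1) - r j := by linarith
    set n := k - j with hn
    set φ := slCutoff f (r k) (r (k - 1)) with hφdef
    set ψ := slCutoff f (r j) (r (j - 1)) with hψdef
    have hlipφ := slCutoff_lipschitz hf habk
    have hlipψ := slCutoff_lipschitz hf habj
    set Kφ : ℝ≥0 := ℓ * ((r (k - 1) - r k)⁻¹).toNNReal with hKφ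
    set Kψ : ℝ≥0 := ℓ * ((r (j - 1) - r j)⁻¹).toNNReal with hKψ
    have hKφcoe : (Kφ : ℝ) = (ℓ : ℝ) * (r (k - 1) - r k)⁻¹ := by
      rw [hKφ, NNReal.coe_mul, Real.coe_toNNReal _ (inv_nonneg.mpr hΔkpos.le)]
    have hKψcoe : (Kψ : ℝ) = (ℓ : ℝ) * (r (j - 1) - r j)⁻¹ := by
      rw [hKψ, NNReal.coe_mul, Real.coe_toNNReal _ (inv_nonneg.mpr hΔjpos.le)]
    -- rewrite the measure using measure preservation
    have hcomp : T^[k] ⁻¹' {x | f x ≤ r k}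
        = T^[j] ⁻¹' (T^[n] ⁻¹' {x | f x ≤ r k}) := by
      have hnj : n + j = k := by omega
      rw [← Set.preimage_comp, ← Function.iterate_add, hnj]
    have hrewrite : μ ((T^[k] ⁻¹' {x | f x ≤ r k}) ∩ (T^[j] ⁻¹' {x | f x ≤ r j}))
        = μ ((T^[n] ⁻¹' {x | f x ≤ r k}) ∩ {x | f x ≤ r j}) := by
      have hkey : (T^[k] ⁻¹' {x | f x ≤ r k}) ∩ (T^[j] ⁻¹' {x | f x ≤ r j})
          = T^[j] ⁻¹' ((T^[n] ⁻¹' {x | f x ≤ r k}) ∩ {x | f x ≤ r j}) := by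
        rw [Set.preimage_inter, ← hcomp]
      rw [hkey]
      exact (hT.iterate j).measure_preimage
        (((hTm n) (hS k)).inter (hS j)).nullMeasurableSet
    -- measurability and integrability
    have hmφ : Measurable φ := hlipφ.continuous.measurable
    have hmψ : Measurable ψ := hlipψ.continuous.measurable
    have hint_meas : AEStronglyMeasurable (fun x => φ (T^[n] x) * ψ x) μ :=
      ((hmφ.comp (hTm n)).mul hmψ).aestronglyMeasurable
    have hint : Integrable (fun x => φ (T^[n] x) * ψ x) μ := by
      refine (integrable_const (1 : ℝ)).mono' hint_meas ?_
      filter_upwards with x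
      rw [Real.norm_eq_abs, abs_mul]
      calc |φ (T^[n] x)| * |ψ x| ≤ 1 * 1 :=
            mul_le_mul (slCutoff_abs_le_one f _ _ _) (slCutoff_abs_le_one f _ _ _)
              (abs_nonneg _) zero_le_one
        _ = 1 := mul_one 1
    have hintφ : Integrable φ μ := by
      refine (integrable_const (1 : ℝ)).mono' hmφ.aestronglyMeasurable ?_
      filter_upwards with x
      rw [Real.norm_eq_abs]
      exact slCutoff_abs_le_one f _ _ _
    have hintψ : Integrable ψ μ := by
      refine (integrable_const (1 : ℝ)).mono' hmψ.aestronglyMeasurable ?_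
      filter_upwards with x
      rw [Real.norm_eq_abs]
      exact slCutoff_abs_le_one f _ _ _
    -- step 1: the measure is bounded by the correlation integral
    have h1 : (μ ((T^[n] ⁻¹' {x | f x ≤ r k}) ∩ {x | f x ≤ r j})).toReal
        ≤ ∫ x, φ (T^[n] x) * ψ x ∂μ := by
      have hms : MeasurableSet ((T^[n] ⁻¹' {x | f x ≤ r k}) ∩ {x | f x ≤ r j}) :=
        ((hTm n) (hS k)).inter (hS j)
      rw [← measureReal_def, ← integral_indicator_one hms]
      refine integral_mono ((integrable_const (1 : ℝ)).indicator hms) hint ?_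
      intro x
      by_cases hx : x ∈ (T^[n] ⁻¹' {x | f x ≤ r k}) ∩ {x | f x ≤ r j}
      · rw [Set.indicator_of_mem hx, Pi.one_apply]
        obtain ⟨hx1, hx2⟩ := hx
        show 1 ≤ slCutoff f (r k) (r (k - 1)) (T^[n] x) * slCutoff f (r j) (r (j - 1)) x
        rw [slCutoff_eq_one f habk hx1, slCutoff_eq_one f habj hx2]
        norm_num
      · rw [Set.indicator_of_notMem hx]
        exact mul_nonneg (slCutoff_nonneg f _ _ _) (slCutoff_nonneg f _ _ _)
    -- step 2: decay of correlations
    have h2 := hmix φ ψ Kφ Kψ 1 1 hlipφ hlipψ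
      (fun x => slCutoff_abs_le_one f _ _ x) (fun x => slCutoff_abs_le_one f _ _ x) n
    have h2' : ∫ x, φ (T^[n] x) * ψ x ∂μ
        ≤ (∫ x, φ x ∂μ) * (∫ x, ψ x ∂μ) + (1 + (Kφ : ℝ)) * (1 + (Kψ : ℝ)) * Φ n := by
      have := abs_le.mp h2
      linarith [this.2]
    -- step 3: bound the integrals by the measures of the enlarged sublevel sets
    have h3 : ∫ x, φ x ∂μ ≤ (μ {x | f x ≤ r (k - 1)}).toReal := by
      rw [← measureReal_def, ← integral_indicator_one (hS (k - 1))]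
      exact integral_mono hintφ ((integrable_const (1 : ℝ)).indicator (hS (k - 1)))
        (fun x => slCutoff_le_indicator f habk x)
    have h5 : ∫ x, ψ x ∂μ ≤ (μ {x | f x ≤ r (j - 1)}).toReal := by
      rw [← measureReal_def, ← integral_indicator_one (hS (j - 1))]
      exact integral_mono hintψ ((integrable_const (1 : ℝ)).indicator (hS (j - 1)))
        (fun x => slCutoff_le_indicator f habj x)
    have h4φ : 0 ≤ ∫ x, φ x ∂μ :=
      integral_nonneg (fun x => slCutoff_nonneg f _ _ x)
    have h4ψ : 0 ≤ ∫ x, ψ x ∂μ :=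
      integral_nonneg (fun x => slCutoff_nonneg f _ _ x)
    have hprod : (∫ x, φ x ∂μ) * (∫ x, ψ x ∂μ)
        ≤ (μ {x | f x ≤ r (k - 1)}).toReal * (μ {x | f x ≤ r (j - 1)}).toReal :=
      mul_le_mul h3 h5 h4ψ ENNReal.toReal_nonneg
    -- step 4: bound the coefficient
    have hc1 : 1 + (Kφ : ℝ) ≤ 2 * (ℓ : ℝ) / (r (k - 1) - r k) := by
      rw [hKφcoe, div_eq_mul_inv]
      nlinarith [mul_inv_cancel₀ hΔkpos.ne', inv_pos.mpr hΔkpos, hΔk]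
    have hc2 : 1 + (Kψ : ℝ) ≤ 2 * (ℓ : ℝ) / (r (j - 1) - r j) := by
      rw [hKψcoe, div_eq_mul_inv]
      nlinarith [mul_inv_cancel₀ hΔjpos.ne', inv_pos.mpr hΔjpos, hΔj]
    have hcpos1 : (0 : ℝ) ≤ 1 + (Kφ : ℝ) := by positivity
    have hcpos2 : (0 : ℝ) ≤ 1 + (Kψ : ℝ) := by positivity
    have hcoef : (1 + (Kφ : ℝ)) * (1 + (Kψ : ℝ)) * Φ n
        ≤ 4 * (ℓ : ℝ) ^ 2 * Φ n / ((r (k - 1) - r k) * (r (j - 1) - r j)) := by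
      have hle : (1 + (Kφ : ℝ)) * (1 + (Kψ : ℝ))
          ≤ (2 * (ℓ : ℝ) / (r (k - 1) - r k)) * (2 * (ℓ : ℝ) / (r (j - 1) - r j)) :=
        mul_le_mul hc1 hc2 hcpos2 (by positivity)
      have heq : (2 * (ℓ : ℝ) / (r (k - 1) - r k)) * (2 * (ℓ : ℝ) / (r (j - 1) - r j)) * Φ n
          = 4 * (ℓ : ℝ) ^ 2 * Φ n / ((r (k - 1) - r k) * (r (j - 1) - r j)) := by
        field_simp
        ring_nf
      rw [← heq]
      exact mul_le_mul_of_nonneg_right hle (hΦ0 n)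
    rw [hrewrite]
    calc (μ ((T^[n] ⁻¹' {x | f x ≤ r k}) ∩ {x | f x ≤ r j})).toReal
        ≤ ∫ x, φ (T^[n] x) * ψ x ∂μ := h1
      _ ≤ (∫ x, φ x ∂μ) * (∫ x, ψ x ∂μ) + (1 + (Kφ : ℝ)) * (1 + (Kψ : ℝ)) * Φ n := h2'
      _ ≤ (μ {x | f x ≤ r (k - 1)}).toReal * (μ {x | f x ≤ r (j - 1)}).toReal
          + 4 * (ℓ : ℝ) ^ 2 * Φ (k - j) / ((r (k - 1) - r k) * (r (j - 1) - r j)) := by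
          rw [← hn]
          exact add_le_add hprod hcoef
end

section
/- Let (X, T, μ) be a measure-preserving dynamical system on a probability space. Let (S_k)_{k≥0} be a decreasing sequence of measurable sets with liminf_{k→∞} log(Σ_{i=0}^{k} μ(S_i)) / log k = z > 0. Set A_k = T^{−k}(S_k), and suppose there are constants c₁, c₂ ≥ 0 and a function Φ : ℕ → [0,∞) with n^α Φ(n) → 0 for every α > 0, such that for all k > j: μ(A_k ∩ A_j) ≤ μ(A_{k−1})·μ(A_{j−1}) + k^{c₁} j^{c₂} Φ(k−j). Define Z_k(x) = Σ_{i=0}^{k} 1_{A_i}(x). Then Z_k / E(Z_k) → 1 both in the L² norm and μ-almost everywhere, where E(Z_k) = ∫ Z_k dμ. -/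
open Filter MeasureTheory Set Topology ENNReal

private lemma sum_sq_split (f : ℕ → ℕ → ℝ) (n : ℕ) :
    ∑ i ∈ Finset.range n, ∑ j ∈ Finset.range n, f i j
      = (∑ i ∈ Finset.range n, f i i)
        + ∑ i ∈ Finset.range n, ∑ j ∈ Finset.range i, (f i j + f j i) := by
  induction n with
  | zero => simp
  | succ n ih =>
    simp only [Finset.sum_range_succ, Finset.sum_add_distrib, ih]
    ring

private lemma ae_tendsto_zero_of_sum_integral {X : Type*} [MeasurableSpace X] (μ : Measure X)
    (g : ℕ → X → ℝ) (hmeas : ∀ n, Measurable (g n)) (hnn : ∀ n x, 0 ≤ g n x)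
    (hsum : (∑' n, ∫⁻ x, ENNReal.ofReal (g n x) ∂μ) ≠ ⊤) :
    ∀ᵐ x ∂μ, Tendsto (fun n => g n x) atTop (𝓝 0) := by
  have hmeas' : ∀ n, Measurable fun x => ENNReal.ofReal (g n x) :=
    fun n => (hmeas n).ennreal_ofReal
  have h := MeasureTheory.lintegral_tsum (fun n => (hmeas' n).aemeasurable) (μ := μ)
  have hfin : ∀ᵐ x ∂μ, (∑' n, ENNReal.ofReal (g n x)) ≠ ⊤ := by
    have hlt : (∫⁻ x, ∑' n, ENNReal.ofReal (g n x) ∂μ) < ⊤ := by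
      rw [h]; exact lt_top_iff_ne_top.2 hsum
    filter_upwards [ae_lt_top (by measurability) hlt.ne] with x hx
    exact hx.ne
  filter_upwards [hfin] with x hx
  have h0 : Tendsto (fun n => ENNReal.ofReal (g n x)) atTop (𝓝 0) :=
    ENNReal.tendsto_atTop_zero_of_tsum_ne_top hx
  have h1 : Tendsto (fun n => (ENNReal.ofReal (g n x)).toReal) atTop (𝓝 (0 : ℝ≥0∞).toReal) :=
    (ENNReal.tendsto_toReal (by simp)).comp h0
  simpa [ENNReal.toReal_ofReal (hnn _ x)] using h1

private lemma gap_fill (u : ℕ → ℝ) (e : ℕ → ℝ) (N : ℕ → ℕ)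
    (hu : Monotone u) (hu0 : ∀ k, 0 ≤ u k)
    (he : Monotone e) (hepos : ∀ n, 0 < e (N n))
    (hNmono : Monotone N) (hNlb : ∀ n, n + 1 ≤ N n)
    (h1 : Tendsto (fun n => u (N n) / e (N n)) atTop (𝓝 1))
    (h2 : Tendsto (fun n => e (N (n + 1)) / e (N n)) atTop (𝓝 1)) :
    Tendsto (fun k => u k / e k) atTop (𝓝 1) := by
  classical
  set ψ : ℕ → ℕ := fun k => Nat.findGreatest (fun n => N n ≤ k) k with hψdef
  have hψ1 : ∀ k, N 0 ≤ k → N (ψ k) ≤ k := fun k hk =>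
    Nat.findGreatest_spec (P := fun n => N n ≤ k) (Nat.zero_le k) hk
  have hψ2 : ∀ k, k < N (ψ k + 1) := by
    intro k
    by_cases h : ψ k + 1 ≤ k
    · by_contra hcon
      push_neg at hcon
      exact Nat.findGreatest_is_greatest (Nat.lt_succ_self _) h hcon
    · push_neg at h
      exact lt_of_lt_of_le h ((Nat.le_succ _).trans (hNlb _))
  have hψ3 : Tendsto ψ atTop atTop := by
    rw [tendsto_atTop_atTop]
    intro n
    refine ⟨N n, fun k hk => ?_⟩
    by_contra hcon
    push_neg at hcon
    have : N (ψ k + 1) ≤ N n := hNmono (Nat.succ_le_of_lt hcon)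
    exact absurd (this.trans hk) (not_le.2 (hψ2 k))
  have hepos' : ∀ n, e (N n) ≠ 0 := fun n => (hepos n).ne'
  have key : ∀ a b c : ℝ, b ≠ 0 → a / b * (b / c) = a / c := fun a b c hb => by
    rw [div_mul_div_comm, mul_comm a b, mul_div_mul_left _ _ hb]
  have hlow : Tendsto (fun n => u (N n) / e (N (n + 1))) atTop (𝓝 1) := by
    have h3 := h1.div h2 one_ne_zero
    rw [div_one] at h3
    refine h3.congr fun n => ?_
    show u (N n) / e (N n) / (e (N (n + 1)) / e (N n)) = _
    rw [div_eq_mul_inv (u (N n) / e (N n)), inv_div]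
    exact key _ _ _ (hepos' n)
  have hup : Tendsto (fun n => u (N (n + 1)) / e (N n)) atTop (𝓝 1) := by
    have h1' : Tendsto (fun n => u (N (n + 1)) / e (N (n + 1))) atTop (𝓝 1) :=
      h1.comp (tendsto_add_atTop_nat 1)
    have h3 := h1'.mul h2
    rw [one_mul] at h3
    exact h3.congr fun n => key _ _ _ (hepos' (n + 1))
  refine tendsto_of_tendsto_of_tendsto_of_le_of_le' (hlow.comp hψ3) (hup.comp hψ3) ?_ ?_
  · filter_upwards [eventually_ge_atTop (N 0)] with k hk
    have h1' : N (ψ k) ≤ k := hψ1 k hk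
    have h2' : k ≤ N (ψ k + 1) := (hψ2 k).le
    have he1 : 0 < e k := lt_of_lt_of_le (hepos (ψ k)) (he h1')
    exact div_le_div₀ (hu0 k) (hu h1') he1 (he h2')
  · filter_upwards [eventually_ge_atTop (N 0)] with k hk
    have h1' : N (ψ k) ≤ k := hψ1 k hk
    have h2' : k ≤ N (ψ k + 1) := (hψ2 k).le
    exact div_le_div₀ (hu0 _) (hu h2') (hepos (ψ k)) (he h1')

private lemma eLpNorm_two_eq_sqrt_integral {X : Type*} [MeasurableSpace X] (μ : Measure X)
    (f : X → ℝ) (hf2 : Integrable (fun x => f x ^ 2) μ) :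
    eLpNorm f 2 μ = ENNReal.ofReal (Real.sqrt (∫ x, f x ^ 2 ∂μ)) := by
  rw [eLpNorm_eq_lintegral_rpow_enorm_toReal two_ne_zero ENNReal.ofNat_ne_top]
  have h1 : ∀ x : X, (‖f x‖ₑ) ^ ((2 : ℝ≥0∞).toReal) = ENNReal.ofReal (f x ^ 2) := by
    intro x
    rw [ENNReal.toReal_ofNat, ← ofReal_norm,
      ENNReal.ofReal_rpow_of_nonneg (norm_nonneg _) (by norm_num)]
    congr 1
    rw [show (2:ℝ) = ((2:ℕ):ℝ) by norm_num, Real.rpow_natCast, Real.norm_eq_abs, sq_abs]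
  simp only [h1]
  rw [← MeasureTheory.ofReal_integral_eq_lintegral_ofReal hf2
    (Filter.Eventually.of_forall fun x => sq_nonneg _)]
  rw [ENNReal.toReal_ofNat]
  rw [ENNReal.ofReal_rpow_of_nonneg (integral_nonneg fun x => sq_nonneg _) (by norm_num)]
  congr 1
  rw [Real.sqrt_eq_rpow]

set_option maxHeartbeats 2000000 in
/-- Dynamical Borel–Cantelli lemma: let `(S k)` be a decreasing sequence of measurable sets
with `liminf_k log(Σ_{i≤k} μ(S i))/log k = z > 0`, let `A k = T⁻ᵏ(S k)`, and suppose that for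
all `k > j` one has `μ(A k ∩ A j) ≤ μ(A (k-1)) μ(A (j-1)) + k^{c₁} j^{c₂} Φ(k-j)` (with the
convention `A (-1) = X`, hence `μ(A (-1)) = 1` when `j = 0`), where `Φ` has superpolynomial
decay and `c₁, c₂ ≥ 0`. Then, with `Z k x = Σ_{i=0}^{k} 1_{A i}(x)` and `E(Z k) = ∫ Z k dμ`,
the ratios `Z k / E(Z k)` converge to `1` in the `L²` norm and `μ`-almost everywhere. -/
theorem dynamical_borel_cantelli
    {X : Type*} [MeasurableSpace X] (μ : Measure X) [IsProbabilityMeasure μ]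
    (T : X → X) (hT : MeasurePreserving T μ μ)
    (S : ℕ → Set X) (hSmeas : ∀ k, MeasurableSet (S k)) (hSdec : ∀ k, S (k + 1) ⊆ S k)
    (z : ℝ) (hz : 0 < z)
    (hgrowth : liminf (fun k : ℕ =>
        Real.log (∑ i ∈ Finset.range (k + 1), (μ (S i)).toReal) / Real.log k) atTop = z)
    (c₁ c₂ : ℝ) (hc₁ : 0 ≤ c₁) (hc₂ : 0 ≤ c₂)
    (Φ : ℕ → ℝ) (hΦ0 : ∀ n, 0 ≤ Φ n)
    (hΦ : ∀ α : ℝ, 0 < α → Tendsto (fun n : ℕ => (n : ℝ) ^ α * Φ n) atTop (𝓝 0))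
    (A : ℕ → Set X) (hA : ∀ k, A k = T^[k] ⁻¹' S k)
    (hcorr : ∀ j k : ℕ, j < k →
      (μ (A k ∩ A j)).toReal
        ≤ (μ (A (k - 1))).toReal * (if j = 0 then 1 else (μ (A (j - 1))).toReal)
          + (k : ℝ) ^ c₁ * (j : ℝ) ^ c₂ * Φ (k - j))
    (Z : ℕ → X → ℝ)
    (hZ : ∀ k x, Z k x = ∑ i ∈ Finset.range (k + 1), Set.indicator (A i) (fun _ => (1 : ℝ)) x) :
    Tendsto (fun k : ℕ =>
        eLpNorm (fun x => Z k x / (∫ y, Z k y ∂μ) - 1) 2 μ) atTop (𝓝 0) ∧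
    ∀ᵐ x ∂μ, Tendsto (fun k : ℕ => Z k x / (∫ y, Z k y ∂μ)) atTop (𝓝 1) := by
  classical
  -- basic facts
  have hTk : ∀ k : ℕ, MeasurePreserving (T^[k]) μ μ := fun k => hT.iterate k
  have hAmeas : ∀ k, MeasurableSet (A k) := fun k =>
    (hA k) ▸ (hTk k).measurable (hSmeas k)
  set a : ℕ → ℝ := fun i => (μ (A i)).toReal with ha_def
  have ha0 : ∀ i, 0 ≤ a i := fun i => ENNReal.toReal_nonneg
  have hμA : ∀ i, μ (A i) = μ (S i) := fun i => by
    rw [hA]; exact (hTk i).measure_preimage (hSmeas i).nullMeasurableSet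
  have ha1 : ∀ i, a i ≤ 1 := fun i => by
    have h := prob_le_one (μ := μ) (s := A i)
    simpa [ha_def] using ENNReal.toReal_mono ENNReal.one_ne_top h
  have hSanti : Antitone S := antitone_nat_of_succ_le hSdec
  have haanti : Antitone a := fun i j hij => by
    simp only [ha_def, hμA]
    exact ENNReal.toReal_mono (measure_ne_top μ _) (measure_mono (hSanti hij))
  set E : ℕ → ℝ := fun k => ∑ i ∈ Finset.range (k + 1), a i with hE_def
  have hE0 : ∀ k, 0 ≤ E k := fun k => Finset.sum_nonneg fun i _ => ha0 i
  have hEmono : Monotone E := monotone_nat_of_le_succ fun k => by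
    simp only [hE_def, Finset.sum_range_succ]
    exact le_add_of_nonneg_right (ha0 _)
  -- integrals
  have hind_int : ∀ i : ℕ, Integrable ((A i).indicator fun _ => (1:ℝ)) μ :=
    fun i => (integrable_const 1).indicator (hAmeas i)
  have hZfun : ∀ k, Z k = fun x => ∑ i ∈ Finset.range (k + 1),
      (A i).indicator (fun _ => (1:ℝ)) x := fun k => funext (hZ k)
  have hZint : ∀ k, Integrable (Z k) μ := fun k => by
    rw [hZfun k]; exact integrable_finset_sum _ fun i _ => hind_int i
  have hZmeas : ∀ k, Measurable (Z k) := fun k => by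
    rw [hZfun k]
    exact Finset.measurable_sum _ fun i _ => measurable_const.indicator (hAmeas i)
  have hIZ : ∀ k, ∫ y, Z k y ∂μ = E k := fun k => by
    rw [hZfun k, integral_finset_sum _ fun i _ => hind_int i]
    refine Finset.sum_congr rfl fun i _ => ?_
    rw [integral_indicator_const _ (hAmeas i)]
    simp [ha_def, Measure.real]
  -- second moment
  set m2 : ℕ → ℕ → ℝ := fun i j => (μ (A i ∩ A j)).toReal with hm2_def
  have hm20 : ∀ i j, 0 ≤ m2 i j := fun i j => ENNReal.toReal_nonneg
  have hm2sym : ∀ i j, m2 i j = m2 j i := fun i j => by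
    simp only [hm2_def, Set.inter_comm]
  have hm2diag : ∀ i, m2 i i = a i := fun i => by simp [hm2_def, ha_def]
  have hm2le_left : ∀ i j, m2 i j ≤ a i := fun i j =>
    ENNReal.toReal_mono (measure_ne_top μ _) (measure_mono Set.inter_subset_left)
  have hm2le_right : ∀ i j, m2 i j ≤ a j := fun i j =>
    ENNReal.toReal_mono (measure_ne_top μ _) (measure_mono Set.inter_subset_right)
  set M2 : ℕ → ℝ := fun k => ∑ i ∈ Finset.range (k+1), ∑ j ∈ Finset.range (k+1), m2 i j
    with hM2_def
  have hZ2fun : ∀ k, (fun x => Z k x ^ 2) = fun x => ∑ i ∈ Finset.range (k+1),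
      ∑ j ∈ Finset.range (k+1), (A i ∩ A j).indicator (fun _ => (1:ℝ)) x := by
    intro k; funext x
    rw [hZ k x, sq, Finset.sum_mul_sum]
    refine Finset.sum_congr rfl fun i _ => Finset.sum_congr rfl fun j _ => ?_
    by_cases hxi : x ∈ A i <;> by_cases hxj : x ∈ A j <;>
      simp [Set.indicator_apply, hxi, hxj]
  have hZ2int : ∀ k, Integrable (fun x => Z k x ^ 2) μ := fun k => by
    rw [hZ2fun k]
    exact integrable_finset_sum _ fun i _ => integrable_finset_sum _ fun j _ =>
      (integrable_const 1).indicator ((hAmeas i).inter (hAmeas j))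
  have hIZ2 : ∀ k, ∫ x, Z k x ^ 2 ∂μ = M2 k := fun k => by
    rw [hZ2fun k, integral_finset_sum _ (fun i _ => integrable_finset_sum _ fun j _ =>
      (integrable_const 1).indicator ((hAmeas i).inter (hAmeas j)))]
    refine Finset.sum_congr rfl fun i _ => ?_
    rw [integral_finset_sum _ (fun j _ =>
      (integrable_const 1).indicator ((hAmeas i).inter (hAmeas j)))]
    refine Finset.sum_congr rfl fun j _ => ?_
    rw [integral_indicator_const _ ((hAmeas i).inter (hAmeas j))]
    simp [hm2_def, Measure.real]
  have hWring : ∀ k, (fun x => (Z k x / E k - 1)^2)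
      = fun x => (1/(E k)^2) * Z k x ^ 2 - (2/(E k)) * Z k x + 1 := by
    intro k; funext x; ring
  have hW_int : ∀ k, Integrable (fun x => (Z k x / E k - 1)^2) μ := fun k => by
    rw [hWring k]
    exact (((hZ2int k).const_mul _).sub ((hZint k).const_mul _)).add (integrable_const 1)
  have hW_eq : ∀ k, E k ≠ 0 →
      ∫ x, (Z k x / E k - 1)^2 ∂μ = (M2 k - (E k)^2)/(E k)^2 := by
    intro k hk
    have hint2a : Integrable (fun x => (1/(E k)^2) * Z k x ^ 2) μ := (hZ2int k).const_mul _
    have hint2b : Integrable (fun x => (2/(E k)) * Z k x) μ := (hZint k).const_mul _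
    have hint1 : Integrable (fun x => (1/(E k)^2) * Z k x ^ 2 - (2/(E k)) * Z k x) μ :=
      hint2a.sub hint2b
    rw [hWring k, integral_add hint1 (integrable_const 1), integral_sub hint2a hint2b,
      integral_const_mul, integral_const_mul, hIZ2 k, hIZ k, integral_const]
    simp only [measure_univ, probReal_univ, ENNReal.toReal_one, smul_eq_mul, one_mul, mul_one]
    field_simp
    ring
  -- growth of E
  have hES : ∀ k, ∑ i ∈ Finset.range (k+1), (μ (S i)).toReal = E k := fun k =>
    Finset.sum_congr rfl fun i _ => by simp only [ha_def, hμA]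
  have hEk1 : ∀ k : ℕ, E k ≤ k + 1 := by
    intro k
    have h := Finset.sum_le_card_nsmul (Finset.range (k+1)) a 1 fun i _ => ha1 i
    simpa using h
  have hliminf : z/2 < liminf (fun k : ℕ => Real.log (E k) / Real.log k) atTop := by
    have heq : (fun k : ℕ => Real.log (∑ i ∈ Finset.range (k+1), (μ (S i)).toReal) / Real.log k)
        = fun k : ℕ => Real.log (E k) / Real.log k := by
      funext k; rw [hES k]
    rw [← heq, hgrowth]; linarith
  have hbdd : IsBoundedUnder (· ≤ ·) atTop (fun k : ℕ => Real.log (E k) / Real.log k) := by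
    refine isBoundedUnder_of_eventually_le (a := 2) ?_
    filter_upwards [eventually_ge_atTop 2] with k hk
    have hk2 : (2:ℝ) ≤ (k:ℝ) := by exact_mod_cast hk
    have hlogk : 0 < Real.log k := Real.log_pos (by linarith)
    by_cases hE1 : E k ≤ 1
    · have : Real.log (E k) ≤ 0 := Real.log_nonpos (hE0 k) hE1
      calc Real.log (E k) / Real.log k ≤ 0 := div_nonpos_of_nonpos_of_nonneg this hlogk.le
        _ ≤ 2 := by norm_num
    · push_neg at hE1
      have hEk2 : E k ≤ (k:ℝ)^2 := by nlinarith [hEk1 k]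
      have : Real.log (E k) ≤ 2 * Real.log k := by
        calc Real.log (E k) ≤ Real.log ((k:ℝ)^2) := Real.log_le_log (by linarith) hEk2
          _ = 2 * Real.log k := by rw [Real.log_pow]; push_cast; ring
      rw [div_le_iff₀ hlogk]; linarith
  have hbddge : IsBoundedUnder (· ≥ ·) atTop (fun k : ℕ => Real.log (E k) / Real.log k) := by
    by_cases ha00 : a 0 = 0
    · exfalso
      have hEzero : ∀ k, E k = 0 := by
        intro k
        rw [hE_def]
        refine Finset.sum_eq_zero fun i _ => le_antisymm ?_ (ha0 i)
        rw [← ha00]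
        exact haanti (Nat.zero_le i)
      have : liminf (fun k : ℕ => Real.log (E k) / Real.log k) atTop = 0 := by
        have : (fun k : ℕ => Real.log (E k) / Real.log k) = fun _ => (0:ℝ) := by
          funext k; rw [hEzero k, Real.log_zero, zero_div]
        rw [this, liminf_const]
      linarith [hliminf, this ▸ hliminf]
    · have ha0pos : 0 < a 0 := lt_of_le_of_ne (ha0 0) (Ne.symm ha00)
      refine isBoundedUnder_of_eventually_ge
        (a := -|Real.log (a 0)| / Real.log 2) ?_
      filter_upwards [eventually_ge_atTop 2] with k hk
      have hk2' : (2:ℝ) ≤ (k:ℝ) := by exact_mod_cast hk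
      have hlog2 : 0 < Real.log 2 := Real.log_pos (by norm_num)
      have hlogk : Real.log 2 ≤ Real.log k := Real.log_le_log (by norm_num) hk2'
      have hEa0 : a 0 ≤ E k := by
        calc a 0 = E 0 := by simp [hE_def]
          _ ≤ E k := hEmono (Nat.zero_le k)
      have hlEa : -|Real.log (a 0)| ≤ Real.log (E k) := by
        calc -|Real.log (a 0)| ≤ Real.log (a 0) := neg_abs_le _
          _ ≤ Real.log (E k) := Real.log_le_log ha0pos hEa0
      rcases le_or_gt 0 (Real.log (E k)) with h | h
      · have : -|Real.log (a 0)| / Real.log 2 ≤ 0 := by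
          apply div_nonpos_of_nonpos_of_nonneg (neg_nonpos_of_nonneg (abs_nonneg _)) hlog2.le
        calc -|Real.log (a 0)| / Real.log 2 ≤ 0 := this
          _ ≤ Real.log (E k) / Real.log k :=
            div_nonneg h (by linarith)
      · calc -|Real.log (a 0)| / Real.log 2 ≤ Real.log (E k) / Real.log 2 :=
            (div_le_div_iff_of_pos_right hlog2).2 hlEa
          _ ≤ Real.log (E k) / Real.log k := by
            rw [div_eq_mul_inv, div_eq_mul_inv]
            exact mul_le_mul_of_nonpos_left (inv_anti₀ hlog2 hlogk) h.le
  have hEgrow : ∀ᶠ k : ℕ in atTop, 0 < E k ∧ (k:ℝ)^(z/2) ≤ E k := by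
    filter_upwards [eventually_lt_of_lt_liminf hliminf hbddge,
      eventually_ge_atTop 2] with k hk hk2
    have hk2' : (2:ℝ) ≤ (k:ℝ) := by exact_mod_cast hk2
    have hlogk : 0 < Real.log k := Real.log_pos (by linarith)
    have hlE : (z/2) * Real.log k < Real.log (E k) := (lt_div_iff₀ hlogk).1 hk
    have hEpos : 0 < E k := by
      rcases lt_or_eq_of_le (hE0 k) with h | h
      · exact h
      · exfalso; rw [← h, Real.log_zero] at hlE; nlinarith
    refine ⟨hEpos, ?_⟩
    rw [Real.rpow_def_of_pos (by linarith : (0:ℝ) < (k:ℝ)), ← Real.exp_log hEpos]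
    exact Real.exp_le_exp.2 (by nlinarith)
  -- superpolynomial decay
  set α : ℝ := 4*(c₁+c₂+3)/z with hα_def
  have hαpos : 0 < α := by positivity
  obtain ⟨N₀, hN₀⟩ := eventually_atTop.1 ((hΦ α hαpos).eventually_lt_const one_pos)
  have hΦle : ∀ n : ℕ, N₀ ≤ n → 1 ≤ n → Φ n ≤ ((n:ℝ)^α)⁻¹ := by
    intro n h1 h2
    have h3 := (hN₀ n h1).le
    have h4 : (0:ℝ) < (n:ℝ)^α :=
      Real.rpow_pos_of_pos (by exact_mod_cast h2) α
    rw [← one_div]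
    exact (le_div_iff₀' h4).2 h3
  -- the b sequence and telescoping bounds
  set b : ℕ → ℝ := fun j => if j = 0 then 1 else a (j-1) with hb_def
  have hb0 : ∀ j, 0 ≤ b j := fun j => by
    rw [hb_def]; dsimp only; split
    · norm_num
    · exact ha0 _
  have hba : ∀ j, a j ≤ b j := fun j => by
    rw [hb_def]; dsimp only; split
    · exact ha1 j
    · exact haanti (by omega)
  have htele0 : ∀ i j, 0 ≤ b i * b j - a i * a j := fun i j => by
    have := mul_le_mul (hba i) (hba j) (ha0 j) (hb0 i)
    linarith
  have hBsum : ∀ n : ℕ, ∑ j ∈ Finset.range (n+1), b j = 1 + ∑ j ∈ Finset.range n, a j := by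
    intro n
    induction n with
    | zero => simp [hb_def]
    | succ n ih =>
      rw [Finset.sum_range_succ, ih, Finset.sum_range_succ]
      have : b (n+1) = a n := by rw [hb_def]; simp
      rw [this]; ring
  have hinner : ∀ i : ℕ, ∑ j ∈ Finset.range i, (b j - a j) ≤ 1 := by
    intro i
    rw [Finset.sum_sub_distrib]
    match i with
    | 0 => simp
    | (n+1) =>
      rw [hBsum n, Finset.sum_range_succ]
      have := ha0 n
      linarith
  have hinner0 : ∀ i : ℕ, 0 ≤ ∑ j ∈ Finset.range i, (b j - a j) :=
    fun i => Finset.sum_nonneg fun j _ => by linarith [hba j]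
  have hTeleSum : ∀ k, ∑ i ∈ Finset.range (k+1), ∑ j ∈ Finset.range i,
      (b i * b j - a i * a j) ≤ 1 + 2 * E k := by
    intro k
    have hstep : ∀ i ∈ Finset.range (k+1), ∑ j ∈ Finset.range i, (b i * b j - a i * a j)
        ≤ b i + (b i - a i) * E k := by
      intro i hi
      have hik : i < k + 1 := Finset.mem_range.1 hi
      have hsub : ∑ j ∈ Finset.range i, a j ≤ E k := by
        rw [hE_def]
        refine Finset.sum_le_sum_of_subset_of_nonneg ?_ fun j _ _ => ha0 j
        exact Finset.range_subset_range.2 (by omega)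
      have hrw : ∑ j ∈ Finset.range i, (b i * b j - a i * a j)
          = b i * (∑ j ∈ Finset.range i, (b j - a j))
            + (b i - a i) * (∑ j ∈ Finset.range i, a j) := by
        rw [Finset.mul_sum, Finset.mul_sum, ← Finset.sum_add_distrib]
        refine Finset.sum_congr rfl fun j _ => ?_
        ring
      rw [hrw]
      have h1 : b i * (∑ j ∈ Finset.range i, (b j - a j)) ≤ b i * 1 :=
        mul_le_mul_of_nonneg_left (hinner i) (hb0 i)
      have h2 : (b i - a i) * (∑ j ∈ Finset.range i, a j) ≤ (b i - a i) * E k :=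
        mul_le_mul_of_nonneg_left hsub (by linarith [hba i])
      linarith
    calc ∑ i ∈ Finset.range (k+1), ∑ j ∈ Finset.range i, (b i * b j - a i * a j)
        ≤ ∑ i ∈ Finset.range (k+1), (b i + (b i - a i) * E k) :=
          Finset.sum_le_sum hstep
      _ = (∑ i ∈ Finset.range (k+1), b i)
          + (∑ i ∈ Finset.range (k+1), (b i - a i)) * E k := by
          rw [Finset.sum_add_distrib, Finset.sum_mul]
      _ ≤ 1 + 2 * E k := by
          have h1 : ∑ i ∈ Finset.range (k+1), b i = 1 + ∑ j ∈ Finset.range k, a j := hBsum k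
          have h2 : ∑ i ∈ Finset.range (k+1), (b i - a i)
              = (1 + ∑ j ∈ Finset.range k, a j) - E k := by
            rw [Finset.sum_sub_distrib, hBsum k, hE_def]
          have h3 : ∑ j ∈ Finset.range k, a j ≤ E k := by
            rw [hE_def]
            exact Finset.sum_le_sum_of_subset_of_nonneg
              (Finset.range_subset_range.2 (by omega)) fun j _ _ => ha0 j
          have h4 : E k ≤ 1 + ∑ j ∈ Finset.range k, a j := by
            rw [hE_def]; dsimp only; rw [Finset.sum_range_succ]
            have := ha1 k
            linarith
          nlinarith [hE0 k, hinner0 (k+1)]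
  have hEk : ∀ k, ∑ i ∈ Finset.range (k+1), a i = E k := fun k => rfl
  have hcorr' : ∀ i j : ℕ, j < i → m2 i j ≤ b i * b j + (i:ℝ)^c₁ * (j:ℝ)^c₂ * Φ (i - j) := by
    intro i j hji
    have h := hcorr j i hji
    have hbi : b i = (μ (A (i-1))).toReal := by
      simp only [hb_def, ha_def, if_neg (show ¬ i = 0 by omega)]
    have hbj : b j = (if j = 0 then 1 else (μ (A (j-1))).toReal) := by
      simp only [hb_def, ha_def]
    rw [hbi, hbj, hm2_def]
    exact h
  have hz4 : 0 < z/4 := by linarith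
  have hrpow_tendsto : Tendsto (fun k : ℕ => (k:ℝ)^(z/4)) atTop atTop :=
    (tendsto_rpow_atTop hz4).comp tendsto_natCast_atTop_atTop
  have hKey : ∀ᶠ k : ℕ in atTop, 0 < E k ∧ (k:ℝ)^(z/2) ≤ E k ∧
      ∫ x, (Z k x / E k - 1)^2 ∂μ ≤ 19 * ((k:ℝ)^(z/4))⁻¹ := by
    filter_upwards [hEgrow, hrpow_tendsto.eventually_ge_atTop (N₀:ℝ),
      eventually_ge_atTop 1, eventually_ge_atTop (⌈(2:ℝ)^(c₁+c₂+2)⌉₊)] with k hEg hN0k hk1 hkc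
    obtain ⟨hEpos, hEge⟩ := hEg
    refine ⟨hEpos, hEge, ?_⟩
    set mk : ℕ := ⌊(k:ℝ)^(z/4)⌋₊ with hmk_def
    have hk1' : (1:ℝ) ≤ (k:ℝ) := by exact_mod_cast hk1
    have hkpos : (0:ℝ) < k := by linarith
    have hz4k1 : (1:ℝ) ≤ (k:ℝ)^(z/4) := by
      simpa using Real.rpow_le_rpow (by norm_num) hk1' hz4.le
    have hmkle : (mk:ℝ) ≤ (k:ℝ)^(z/4) := Nat.floor_le (by positivity)
    have hmklt : (k:ℝ)^(z/4) < mk + 1 := Nat.lt_floor_add_one _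
    have hN0mk : N₀ ≤ mk := Nat.le_floor hN0k
    set cErr : ℝ := ((k:ℝ)+1)^(c₁+c₂) * ((k:ℝ)^(c₁+c₂+3))⁻¹ with hcErr_def
    have hcErr0 : 0 ≤ cErr := by positivity
    -- far pairs
    have hfar : ∀ i j : ℕ, j < i → i ≤ k → mk < i - j →
        m2 i j - a i * a j ≤ (b i * b j - a i * a j) + cErr := by
      intro i j hji hik hgap
      have h1 := hcorr' i j hji
      have hΦij : Φ (i - j) ≤ ((k:ℝ)^(c₁+c₂+3))⁻¹ := by
        have hgap1 : 1 ≤ i - j := by omega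
        have h2 : Φ (i-j) ≤ (((i-j:ℕ):ℝ)^α)⁻¹ := hΦle _ (by omega) hgap1
        refine h2.trans ?_
        have h4 : (k:ℝ)^(z/4) ≤ ((i-j:ℕ):ℝ) := by
          have h5 : (mk:ℝ) + 1 ≤ ((i-j:ℕ):ℝ) := by exact_mod_cast (by omega : mk + 1 ≤ i - j)
          linarith
        have h3 : (k:ℝ)^(c₁+c₂+3) ≤ ((i-j:ℕ):ℝ)^α := by
          calc (k:ℝ)^(c₁+c₂+3) = ((k:ℝ)^(z/4))^α := by
                rw [← Real.rpow_mul hkpos.le]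
                congr 1
                rw [hα_def]
                field_simp
            _ ≤ ((i-j:ℕ):ℝ)^α := Real.rpow_le_rpow (by positivity) h4 hαpos.le
        exact inv_anti₀ (by positivity) h3
      have hik' : (i:ℝ) ≤ (k:ℝ) := Nat.cast_le.2 hik
      have hjk' : (j:ℝ) ≤ (k:ℝ) := Nat.cast_le.2 (by omega)
      have hic : (i:ℝ)^c₁ ≤ ((k:ℝ)+1)^c₁ :=
        Real.rpow_le_rpow (by positivity) (by linarith) hc₁
      have hjc : (j:ℝ)^c₂ ≤ ((k:ℝ)+1)^c₂ :=
        Real.rpow_le_rpow (by positivity) (by linarith) hc₂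
      have herr : (i:ℝ)^c₁ * (j:ℝ)^c₂ * Φ (i-j) ≤ cErr := by
        calc (i:ℝ)^c₁ * (j:ℝ)^c₂ * Φ (i-j)
            ≤ (((k:ℝ)+1)^c₁ * ((k:ℝ)+1)^c₂) * ((k:ℝ)^(c₁+c₂+3))⁻¹ := by
              refine mul_le_mul (mul_le_mul hic hjc (by positivity) (by positivity)) hΦij
                (hΦ0 _) (by positivity)
          _ = cErr := by
              rw [hcErr_def, ← Real.rpow_add (by positivity : (0:ℝ) < (k:ℝ)+1)]
      linarith
    have hnear : ∀ i j : ℕ, m2 i j - a i * a j ≤ a i := fun i j => by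
      have := mul_nonneg (ha0 i) (ha0 j)
      linarith [hm2le_left i j]
    -- per-row bound
    have hperi : ∀ i ∈ Finset.range (k+1), ∑ j ∈ Finset.range i, (m2 i j - a i * a j)
        ≤ (mk:ℝ) * a i + (∑ j ∈ Finset.range i, (b i * b j - a i * a j)) + (k:ℝ) * cErr := by
      intro i hi
      have hik : i < k + 1 := Finset.mem_range.1 hi
      rw [← Finset.sum_filter_add_sum_filter_not (Finset.range i) (fun j => i - j ≤ mk)]
      have hnear_bd : ∑ j ∈ (Finset.range i).filter (fun j => i - j ≤ mk),
          (m2 i j - a i * a j) ≤ (mk:ℝ) * a i := by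
        have hcard : ((Finset.range i).filter (fun j => i - j ≤ mk)).card ≤ mk := by
          have hsub : (Finset.range i).filter (fun j => i - j ≤ mk) ⊆ Finset.Ico (i - mk) i := by
            intro j hj
            simp only [Finset.mem_filter, Finset.mem_range] at hj
            exact Finset.mem_Ico.2 ⟨by omega, hj.1⟩
          calc ((Finset.range i).filter (fun j => i - j ≤ mk)).card
              ≤ (Finset.Ico (i - mk) i).card := Finset.card_le_card hsub
            _ ≤ mk := by rw [Nat.card_Ico]; omega
        calc ∑ j ∈ (Finset.range i).filter (fun j => i - j ≤ mk), (m2 i j - a i * a j)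
            ≤ ((Finset.range i).filter (fun j => i - j ≤ mk)).card • a i :=
              Finset.sum_le_card_nsmul _ _ _ fun j _ => hnear i j
          _ ≤ (mk:ℝ) * a i := by
              rw [nsmul_eq_mul]
              exact mul_le_mul_of_nonneg_right (by exact_mod_cast hcard) (ha0 i)
      have hfar_bd : ∑ j ∈ (Finset.range i).filter (fun j => ¬ i - j ≤ mk),
          (m2 i j - a i * a j)
          ≤ (∑ j ∈ Finset.range i, (b i * b j - a i * a j)) + (k:ℝ) * cErr := by
        have hstep : ∑ j ∈ (Finset.range i).filter (fun j => ¬ i - j ≤ mk),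
            (m2 i j - a i * a j)
            ≤ ∑ j ∈ (Finset.range i).filter (fun j => ¬ i - j ≤ mk),
              ((b i * b j - a i * a j) + cErr) := by
          refine Finset.sum_le_sum fun j hj => ?_
          simp only [Finset.mem_filter, Finset.mem_range, not_le] at hj
          exact hfar i j hj.1 (by omega) hj.2
        refine hstep.trans ?_
        rw [Finset.sum_add_distrib, Finset.sum_const, nsmul_eq_mul]
        have hc1 : (((Finset.range i).filter (fun j => ¬ i - j ≤ mk)).card : ℝ) ≤ (k:ℝ) := by
          have : ((Finset.range i).filter (fun j => ¬ i - j ≤ mk)).card ≤ k := by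
            calc ((Finset.range i).filter (fun j => ¬ i - j ≤ mk)).card
                ≤ (Finset.range i).card := Finset.card_le_card (Finset.filter_subset _ _)
              _ = i := Finset.card_range i
              _ ≤ k := by omega
          exact_mod_cast this
        have hsum_tele : ∑ j ∈ (Finset.range i).filter (fun j => ¬ i - j ≤ mk),
            (b i * b j - a i * a j) ≤ ∑ j ∈ Finset.range i, (b i * b j - a i * a j) :=
          Finset.sum_le_sum_of_subset_of_nonneg (Finset.filter_subset _ _)
            fun j _ _ => htele0 i j
        have := mul_le_mul_of_nonneg_right hc1 hcErr0
        linarith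
      linarith
    -- total off-diagonal bound
    have hoff : ∑ i ∈ Finset.range (k+1), ∑ j ∈ Finset.range i, (m2 i j - a i * a j)
        ≤ (mk:ℝ) * E k + (1 + 2 * E k) + ((k:ℝ)+1) * ((k:ℝ) * cErr) := by
      calc ∑ i ∈ Finset.range (k+1), ∑ j ∈ Finset.range i, (m2 i j - a i * a j)
          ≤ ∑ i ∈ Finset.range (k+1), ((mk:ℝ) * a i
            + (∑ j ∈ Finset.range i, (b i * b j - a i * a j)) + (k:ℝ) * cErr) :=
            Finset.sum_le_sum hperi
        _ = (mk:ℝ) * E k + (∑ i ∈ Finset.range (k+1), ∑ j ∈ Finset.range i,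
              (b i * b j - a i * a j)) + ((k:ℝ)+1) * ((k:ℝ) * cErr) := by
            rw [Finset.sum_add_distrib, Finset.sum_add_distrib, ← Finset.mul_sum, hEk k,
              Finset.sum_const, Finset.card_range, nsmul_eq_mul]
            push_cast
            ring
        _ ≤ (mk:ℝ) * E k + (1 + 2 * E k) + ((k:ℝ)+1) * ((k:ℝ) * cErr) := by
            have := hTeleSum k
            linarith
    -- diagonal decomposition
    have hM2dec : M2 k - E k^2 ≤ E k
        + 2 * (∑ i ∈ Finset.range (k+1), ∑ j ∈ Finset.range i, (m2 i j - a i * a j)) := by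
      have h1 : M2 k = (∑ i ∈ Finset.range (k+1), a i)
          + ∑ i ∈ Finset.range (k+1), ∑ j ∈ Finset.range i, (m2 i j + m2 j i) := by
        rw [hM2_def]
        dsimp only
        rw [sum_sq_split (fun i j => m2 i j) (k+1)]
        congr 1
        exact Finset.sum_congr rfl fun i _ => hm2diag i
      have h2 : E k^2 = (∑ i ∈ Finset.range (k+1), a i * a i)
          + ∑ i ∈ Finset.range (k+1), ∑ j ∈ Finset.range i, (a i * a j + a j * a i) := by
        have h2' : E k ^ 2 = ∑ i ∈ Finset.range (k+1), ∑ j ∈ Finset.range (k+1), a i * a j := by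
          rw [sq, ← hEk k, Finset.sum_mul_sum]
        rw [h2', sum_sq_split (fun i j => a i * a j) (k+1)]
      have h4 : ∑ i ∈ Finset.range (k+1), ∑ j ∈ Finset.range i, (m2 i j + m2 j i)
          - ∑ i ∈ Finset.range (k+1), ∑ j ∈ Finset.range i, (a i * a j + a j * a i)
          = 2 * ∑ i ∈ Finset.range (k+1), ∑ j ∈ Finset.range i, (m2 i j - a i * a j) := by
        rw [← Finset.sum_sub_distrib, Finset.mul_sum]
        refine Finset.sum_congr rfl fun i _ => ?_
        rw [← Finset.sum_sub_distrib, Finset.mul_sum]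
        refine Finset.sum_congr rfl fun j _ => ?_
        rw [hm2sym j i]
        ring
      have h6 : 0 ≤ ∑ i ∈ Finset.range (k+1), a i * a i :=
        Finset.sum_nonneg fun i _ => mul_nonneg (ha0 i) (ha0 i)
      have h7 := hEk k
      rw [h1, h2]
      linarith
    -- far sum at most 1
    have hfar_total : ((k:ℝ)+1) * ((k:ℝ) * cErr) ≤ 1 := by
      have hq2 : ((k:ℝ)+1)^((c₁+c₂)+2) ≤ 2^((c₁+c₂)+2) * (k:ℝ)^((c₁+c₂)+2) := by
        rw [← Real.mul_rpow (by norm_num) (by positivity)]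
        exact Real.rpow_le_rpow (by positivity) (by linarith) (by positivity)
      have hkc' : (2:ℝ)^((c₁+c₂)+2) ≤ (k:ℝ) := by
        calc (2:ℝ)^((c₁+c₂)+2) ≤ (⌈(2:ℝ)^(c₁+c₂+2)⌉₊ : ℝ) := Nat.le_ceil _
          _ ≤ (k:ℝ) := by exact_mod_cast hkc
      have hsplit1 : ((k:ℝ)+1) * (k:ℝ) ≤ ((k:ℝ)+1)^((2:ℝ)) := by
        rw [show ((2:ℝ)) = ((2:ℕ):ℝ) by norm_num, Real.rpow_natCast, pow_two]
        exact mul_le_mul_of_nonneg_left (by linarith) (by positivity)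
      calc ((k:ℝ)+1) * ((k:ℝ) * cErr) = (((k:ℝ)+1) * (k:ℝ)) * cErr := by ring
        _ ≤ ((k:ℝ)+1)^((2:ℝ)) * cErr := mul_le_mul_of_nonneg_right hsplit1 hcErr0
        _ = ((k:ℝ)+1)^((c₁+c₂)+2) * ((k:ℝ)^(c₁+c₂+3))⁻¹ := by
            rw [hcErr_def, ← mul_assoc, ← Real.rpow_add (by positivity : (0:ℝ) < (k:ℝ)+1)]
            ring_nf
        _ ≤ (2^((c₁+c₂)+2) * (k:ℝ)^((c₁+c₂)+2)) * ((k:ℝ)^(c₁+c₂+3))⁻¹ :=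
            mul_le_mul_of_nonneg_right hq2 (by positivity)
        _ = 2^((c₁+c₂)+2) * ((k:ℝ)^(c₁+c₂+2) * ((k:ℝ)^(c₁+c₂+3))⁻¹) := by ring
        _ = 2^((c₁+c₂)+2) * ((k:ℝ))⁻¹ := by
            congr 1
            rw [← Real.rpow_neg hkpos.le, ← Real.rpow_add hkpos,
              show c₁+c₂+2 + -(c₁+c₂+3) = -1 by ring, Real.rpow_neg_one]
        _ ≤ (k:ℝ) * ((k:ℝ))⁻¹ := mul_le_mul_of_nonneg_right hkc' (by positivity)
        _ = 1 := mul_inv_cancel₀ hkpos.ne'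
    have hE1 : 1 ≤ E k := by
      have : (1:ℝ) ≤ (k:ℝ)^(z/2) := by
        simpa using Real.rpow_le_rpow (by norm_num) hk1' (by linarith : 0 ≤ z/2)
      linarith
    have hVle : M2 k - E k^2 ≤ 19 * (k:ℝ)^(z/4) * E k := by
      have hprod1 : (mk:ℝ) * E k ≤ (k:ℝ)^(z/4) * E k :=
        mul_le_mul_of_nonneg_right hmkle (hE0 k)
      have hprod2 : E k ≤ (k:ℝ)^(z/4) * E k := le_mul_of_one_le_left (hE0 k) hz4k1
      have hprod3 : (1:ℝ) ≤ (k:ℝ)^(z/4) * E k :=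
        le_trans (by norm_num) (mul_le_mul hz4k1 hE1 zero_le_one (by positivity))
      linarith
    -- conclude
    rw [hW_eq k hEpos.ne']
    have hE2pos : (0:ℝ) < E k^2 := by positivity
    have hkz2pos : (0:ℝ) < (k:ℝ)^(z/2) := Real.rpow_pos_of_pos hkpos _
    have hkz4pos : (0:ℝ) < (k:ℝ)^(z/4) := Real.rpow_pos_of_pos hkpos _
    have hstep1 : (M2 k - E k^2)/E k^2 ≤ (19*(k:ℝ)^(z/4)*E k)/(E k^2) :=
      (div_le_div_iff_of_pos_right hE2pos).2 hVle
    have hstep2 : (19*(k:ℝ)^(z/4)*E k)/(E k^2) = 19*(k:ℝ)^(z/4)/E k := by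
      rw [sq]
      field_simp
    have hstep3 : 19*(k:ℝ)^(z/4)/E k ≤ 19*(k:ℝ)^(z/4)/(k:ℝ)^(z/2) :=
      div_le_div_of_nonneg_left (by positivity) hkz2pos hEge
    have hstep4 : 19*(k:ℝ)^(z/4)/(k:ℝ)^(z/2) = 19*((k:ℝ)^(z/4))⁻¹ := by
      rw [mul_div_assoc, ← Real.rpow_sub hkpos,
        show z/4 - z/2 = -(z/4) by ring, Real.rpow_neg hkpos.le]
    linarith
  -- difference estimates for E
  have hdiff : ∀ p q : ℕ, p ≤ q → E q - E p ≤ ((q - p : ℕ):ℝ) * a p := by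
    intro p q hpq
    have h1 : ∑ i ∈ Finset.Ico (p+1) (q+1), a i = E q - E p := by
      rw [Finset.sum_Ico_eq_sub a (by omega : p+1 ≤ q+1), hEk p, hEk q]
    rw [← h1]
    calc ∑ i ∈ Finset.Ico (p+1) (q+1), a i ≤ (Finset.Ico (p+1) (q+1)).card • a p :=
        Finset.sum_le_card_nsmul _ _ _ fun i hi =>
          haanti (by have := (Finset.mem_Ico.1 hi).1; omega)
      _ = ((q - p:ℕ):ℝ) * a p := by
          rw [Nat.card_Ico, nsmul_eq_mul]
          congr 2
          omega
  have hlowa : ∀ p : ℕ, ((p:ℝ)+1) * a p ≤ E p := by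
    intro p
    rw [← hEk p]
    calc ((p:ℝ)+1) * a p = (Finset.range (p+1)).card • a p := by
          rw [Finset.card_range, nsmul_eq_mul]; push_cast; ring
      _ ≤ ∑ i ∈ Finset.range (p+1), a i :=
          Finset.card_nsmul_le_sum _ _ _ fun i hi =>
            haanti (by have := Finset.mem_range.1 hi; omega)
  -- rewrite the integral in the goal
  simp only [hIZ]
  obtain ⟨K₁, hK₁⟩ := eventually_atTop.1 hKey
  constructor
  · -- L² convergence
    have hup0 : Tendsto (fun k : ℕ => ENNReal.ofReal (Real.sqrt (19 * ((k:ℝ)^(z/4))⁻¹)))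
        atTop (𝓝 0) := by
      have h1 : Tendsto (fun k : ℕ => 19 * ((k:ℝ)^(z/4))⁻¹) atTop (𝓝 0) := by
        have h2 := hrpow_tendsto.inv_tendsto_atTop
        have h3 := h2.const_mul (19:ℝ)
        simpa using h3
      have h3 : Tendsto (fun k : ℕ => Real.sqrt (19 * ((k:ℝ)^(z/4))⁻¹)) atTop (𝓝 0) := by
        have h4 := (Real.continuous_sqrt.tendsto' 0 0 Real.sqrt_zero).comp h1
        exact h4
      have h5 := (ENNReal.continuous_ofReal.tendsto' 0 0 (by simp)).comp h3
      exact h5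
    refine tendsto_of_tendsto_of_tendsto_of_le_of_le'
      (tendsto_const_nhds (x := (0:ℝ≥0∞))) hup0
      (Filter.Eventually.of_forall fun k => zero_le) ?_
    filter_upwards [hKey] with k hk
    obtain ⟨hEpos, hEge, hint⟩ := hk
    rw [eLpNorm_two_eq_sqrt_integral μ _ (hW_int k)]
    exact ENNReal.ofReal_le_ofReal (Real.sqrt_le_sqrt hint)
  · -- a.e. convergence
    have hZmono : ∀ x, Monotone fun k => Z k x := by
      intro x
      apply monotone_nat_of_le_succ
      intro k
      rw [hZ (k+1) x, hZ k x, Finset.sum_range_succ _ (k+1)]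
      exact le_add_of_nonneg_right (Set.indicator_nonneg (fun _ _ => zero_le_one) x)
    have hZnn : ∀ k x, 0 ≤ Z k x := fun k x => by
      rw [hZ k x]
      exact Finset.sum_nonneg fun i _ => Set.indicator_nonneg (fun _ _ => zero_le_one) x
    set M : ℕ := ⌈8/z⌉₊ + 1 with hM_def
    have hM8 : 8/z ≤ (M:ℝ) := by
      calc 8/z ≤ (⌈8/z⌉₊:ℝ) := Nat.le_ceil _
        _ ≤ (M:ℝ) := by rw [hM_def]; push_cast; linarith
    set N : ℕ → ℕ := fun n => (n + K₁ + 1)^M with hN_def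
    have hNmono : Monotone N := fun n m hnm => Nat.pow_le_pow_left (by omega) M
    have hMne : M ≠ 0 := by rw [hM_def]; omega
    have hNlb : ∀ n, n + 1 ≤ N n := fun n =>
      le_trans (by omega) (Nat.le_self_pow hMne _)
    have hNK₁ : ∀ n, K₁ ≤ N n := fun n =>
      le_trans (by omega) (Nat.le_self_pow hMne _)
    have hNprop : ∀ n, 0 < E (N n) ∧ ((N n:ℕ):ℝ)^(z/2) ≤ E (N n) ∧
        ∫ x, (Z (N n) x / E (N n) - 1)^2 ∂μ ≤ 19 * (((N n:ℕ):ℝ)^(z/4))⁻¹ :=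
      fun n => hK₁ _ (hNK₁ n)
    -- summable bound
    have hsummand : ∀ n : ℕ, 19 * (((N n:ℕ):ℝ)^(z/4))⁻¹ ≤ 19 * (((n:ℝ)+1)^2)⁻¹ := by
      intro n
      have hx1 : (1:ℝ) ≤ ((n + K₁ + 1:ℕ):ℝ) := by exact_mod_cast Nat.succ_le_succ (Nat.zero_le _)
      have h1 : ((n:ℝ)+1)^2 ≤ ((N n:ℕ):ℝ)^(z/4) := by
        have hNcast : ((N n:ℕ):ℝ) = (((n+K₁+1:ℕ):ℝ))^(M:ℕ) := by
          rw [hN_def]; push_cast; ring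
        have hexp : (2:ℝ) ≤ (M:ℝ) * (z/4) := by
          rw [div_le_iff₀ hz] at hM8
          nlinarith
        calc ((n:ℝ)+1)^2 ≤ (((n+K₁+1:ℕ):ℝ))^(2:ℕ) := by
              apply pow_le_pow_left₀ (by positivity)
              push_cast; linarith
          _ = (((n+K₁+1:ℕ):ℝ))^((2:ℝ)) := by
              rw [show ((2:ℝ)) = ((2:ℕ):ℝ) by norm_num, Real.rpow_natCast]
          _ ≤ (((n+K₁+1:ℕ):ℝ))^((M:ℝ) * (z/4)) :=
              Real.rpow_le_rpow_of_exponent_le hx1 hexp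
          _ = ((N n:ℕ):ℝ)^(z/4) := by
              rw [hNcast, ← Real.rpow_natCast (((n+K₁+1:ℕ):ℝ)) M, ← Real.rpow_mul (by positivity)]
      have h2 : (((n:ℝ)+1)^2)⁻¹ ≥ (((N n:ℕ):ℝ)^(z/4))⁻¹ := by
        apply inv_anti₀ (by positivity) h1
      linarith
    have hsummable : Summable (fun n : ℕ => 19 * (((n:ℝ)+1)^2)⁻¹) := by
      have hsum1 : Summable (fun n : ℕ => (1:ℝ)/(n:ℝ)^2) :=
        Real.summable_one_div_nat_pow.2 one_lt_two
      have hsum2 : Summable (fun n : ℕ => (1:ℝ)/((n+1:ℕ):ℝ)^2) :=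
        (summable_nat_add_iff 1).2 hsum1
      have hsum3 : Summable (fun n : ℕ => (((n:ℝ)+1)^2)⁻¹) := by
        refine hsum2.congr fun n => ?_
        rw [one_div]
        congr 2
        push_cast
        ring
      exact hsum3.mul_left 19
    have hGmeas : ∀ n, Measurable (fun x => (Z (N n) x / E (N n) - 1)^2) := by
      intro n
      have h1 : Measurable (fun x => Z (N n) x / E (N n) - 1) :=
        ((hZmeas (N n)).div_const _).sub_const 1
      exact h1.pow_const 2
    have htsum : (∑' n, ∫⁻ x, ENNReal.ofReal ((Z (N n) x / E (N n) - 1)^2) ∂μ) ≠ ⊤ := by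
      have hle : ∀ n, ∫⁻ x, ENNReal.ofReal ((Z (N n) x / E (N n) - 1)^2) ∂μ
          ≤ ENNReal.ofReal (19 * (((n:ℝ)+1)^2)⁻¹) := by
        intro n
        rw [← MeasureTheory.ofReal_integral_eq_lintegral_ofReal (hW_int (N n))
          (Filter.Eventually.of_forall fun x => sq_nonneg _)]
        exact ENNReal.ofReal_le_ofReal (le_trans (hNprop n).2.2 (hsummand n))
      refine ne_top_of_le_ne_top ?_ (ENNReal.tsum_le_tsum hle)
      rw [← ENNReal.ofReal_tsum_of_nonneg (fun n => by positivity) hsummable]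
      exact ENNReal.ofReal_ne_top
    have hae1 := ae_tendsto_zero_of_sum_integral μ _ hGmeas
      (fun n x => sq_nonneg _) htsum
    -- ratio of E along the subsequence tends to 1
    have hratio : Tendsto (fun n => E (N (n+1)) / E (N n)) atTop (𝓝 1) := by
      have hβ : Tendsto (fun n : ℕ => ((((n + K₁ + 1:ℕ):ℝ)+1)/((n + K₁ + 1:ℕ):ℝ))^M)
          atTop (𝓝 1) := by
        have hxx : Tendsto (fun n : ℕ => ((n + K₁ + 1:ℕ):ℝ)) atTop atTop := by
          apply tendsto_natCast_atTop_atTop.comp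
          exact tendsto_atTop_atTop.2 fun b => ⟨b, fun n hn => by omega⟩
        have h1 : Tendsto (fun n : ℕ => (((n + K₁ + 1:ℕ):ℝ)+1)/((n + K₁ + 1:ℕ):ℝ))
            atTop (𝓝 1) := by
          have h2 := hxx.inv_tendsto_atTop
          have h3 : Tendsto (fun n : ℕ => 1 + (((n + K₁ + 1:ℕ):ℝ))⁻¹) atTop (𝓝 (1 + 0)) :=
            tendsto_const_nhds.add h2
          rw [add_zero] at h3
          refine h3.congr fun n => ?_
          have hxpos : (0:ℝ) < ((n + K₁ + 1:ℕ):ℝ) := by positivity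
          field_simp
        have h4 := h1.pow M
        rw [one_pow] at h4
        exact h4
      have hlow1 : ∀ n, 1 ≤ E (N (n+1)) / E (N n) := fun n =>
        (one_le_div (hNprop n).1).2 (hEmono (hNmono (Nat.le_succ n)))
      have hup2 : ∀ n : ℕ, E (N (n+1)) / E (N n)
          ≤ ((((n + K₁ + 1:ℕ):ℝ)+1)/((n + K₁ + 1:ℕ):ℝ))^M := by
        intro n
        set x : ℝ := ((n + K₁ + 1:ℕ):ℝ) with hx_def
        have hx1 : (1:ℝ) ≤ x := by rw [hx_def]; exact_mod_cast Nat.succ_le_succ (Nat.zero_le _)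
        have hxpos : (0:ℝ) < x := by linarith
        have hxMpos : (0:ℝ) < x^M := by positivity
        have hE0pos := (hNprop n).1
        have hd := hdiff (N n) (N (n+1)) (hNmono (Nat.le_succ n))
        have hl := hlowa (N n)
        have hNn : ((N n:ℕ):ℝ) = x^M := by rw [hN_def, hx_def]; push_cast; ring
        have hNn1 : ((N (n+1):ℕ):ℝ) = (x+1)^M := by rw [hN_def, hx_def]; push_cast; ring
        have hΔ : ((N (n+1) - N n:ℕ):ℝ) = (x+1)^M - x^M := by
          rw [Nat.cast_sub (hNmono (Nat.le_succ n)), hNn, hNn1]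
        have hΔ0 : (0:ℝ) ≤ (x+1)^M - x^M := by
          have := pow_le_pow_left₀ hxpos.le (by linarith : x ≤ x + 1) M
          linarith
        have ha3 : a (N n) ≤ E (N n) / x^M := by
          rw [le_div_iff₀ hxMpos]
          have h5 : x^M * a (N n) ≤ (((N n:ℕ):ℝ)+1) * a (N n) := by
            apply mul_le_mul_of_nonneg_right _ (ha0 (N n))
            rw [hNn]; linarith
          calc a (N n) * x^M = x^M * a (N n) := by ring
            _ ≤ (((N n:ℕ):ℝ)+1) * a (N n) := h5
            _ ≤ E (N n) := hl
        rw [div_le_iff₀ hE0pos]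
        have h6 : E (N (n+1)) ≤ E (N n) + ((x+1)^M - x^M) * (E (N n) / x^M) := by
          have h7 : ((x+1)^M - x^M) * a (N n) ≤ ((x+1)^M - x^M) * (E (N n) / x^M) :=
            mul_le_mul_of_nonneg_left ha3 hΔ0
          rw [hΔ] at hd
          linarith
        have h8 : E (N n) + ((x+1)^M - x^M) * (E (N n) / x^M)
            = ((x+1)/x)^M * E (N n) := by
          rw [div_pow]
          field_simp
          ring
        linarith
      exact tendsto_of_tendsto_of_tendsto_of_le_of_le tendsto_const_nhds hβ hlow1 hup2
    -- combine
    filter_upwards [hae1] with x hx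
    have hx1 : Tendsto (fun n => Z (N n) x / E (N n)) atTop (𝓝 1) := by
      have h2 : Tendsto (fun n => |Z (N n) x / E (N n) - 1|) atTop (𝓝 0) := by
        have h3 := (Real.continuous_sqrt.tendsto 0).comp hx
        simp only [Function.comp_def, Real.sqrt_zero] at h3
        refine h3.congr fun n => ?_
        rw [Real.sqrt_sq_eq_abs]
      have h3 : Tendsto (fun n => Z (N n) x / E (N n) - 1) atTop (𝓝 0) := by
        have h4 : ∀ n : ℕ, -|Z (N n) x / E (N n) - 1| ≤ Z (N n) x / E (N n) - 1 :=
          fun n => neg_abs_le _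
        have h5 : ∀ n : ℕ, Z (N n) x / E (N n) - 1 ≤ |Z (N n) x / E (N n) - 1| :=
          fun n => le_abs_self _
        have h6 : Tendsto (fun n => -|Z (N n) x / E (N n) - 1|) atTop (𝓝 (-0)) := h2.neg
        rw [neg_zero] at h6
        exact tendsto_of_tendsto_of_tendsto_of_le_of_le h6 h2 h4 h5
      have h7 := h3.add_const 1
      rw [zero_add] at h7
      refine h7.congr fun n => ?_
      ring
    exact gap_fill (fun k => Z k x) E N (hZmono x) (fun k => hZnn k x)
      hEmono (fun n => (hNprop n).1) hNmono hNlb hx1 hratio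
end

section
/- Let (X, T, μ) be an ergodic measure-preserving dynamical system with μ a finite, nonatomic measure, and let f : X → [0,∞) be measurable with μ(S_r) > 0 for all r > 0, where S_r = {x : f(x) ≤ r}. Suppose that for μ-almost every x, liminf_{r→0} log τ(x, S_r)/(−log r) > limsup_{r→0} log μ(S_r)/log r. Then the system has trivial return time statistics in the sets S_r: for every t > 0, lim_{r→0} μ({x ∈ S_r : τ(x, S_r) ≥ t/μ(S_r)}) / μ(S_r) = 0 (in particular the limit exists and equals 0 for each t). -/
open Filter MeasureTheory Set Topology ENNReal

set_option linter.unusedSectionVars false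

namespace TRTS

variable {X : Type*} [MeasurableSpace X]

/-- The set of points whose orbit avoids `S` during times `1,…,m`. -/
def U (T : X → X) (S : Set X) (m : ℕ) : Set X := {x | ∀ k, 0 < k → k ≤ m → T^[k] x ∉ S}

lemma hitTime_le_nat_iff {T : X → X} {S : Set X} {x : X} {m : ℕ} :
    hitTime T S x ≤ (m : ℕ∞) ↔ ∃ k, 0 < k ∧ k ≤ m ∧ T^[k] x ∈ S := by
  constructor
  · intro h
    by_contra hc
    push_neg at hc
    have h2 : ((m + 1 : ℕ) : ℕ∞) ≤ hitTime T S x := by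
      apply le_sInf
      rintro b ⟨n, ⟨hn0, hnS⟩, rfl⟩
      show ((m + 1 : ℕ) : ℕ∞) ≤ (n : ℕ∞)
      refine Nat.cast_le.2 ?_
      by_contra hh
      push_neg at hh
      exact hc n hn0 (by omega) hnS
    have h3 := h2.trans h
    rw [Nat.cast_le] at h3
    omega
  · rintro ⟨k, hk0, hkm, hkS⟩
    have h1 : hitTime T S x ≤ (k : ℕ∞) := sInf_le ⟨k, ⟨hk0, hkS⟩, rfl⟩
    exact h1.trans (Nat.cast_le.2 hkm)

lemma mem_U_iff {T : X → X} {S : Set X} {m : ℕ} {x : X} :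
    x ∈ U T S m ↔ (m : ℕ∞) < hitTime T S x := by
  rw [lt_iff_not_ge, hitTime_le_nat_iff]
  constructor
  · rintro h ⟨k, h0, hm, hS⟩; exact h k h0 hm hS
  · intro h k h0 hm hS; exact h ⟨k, h0, hm, hS⟩

lemma one_le_hitTime {T : X → X} {S : Set X} {x : X} : 1 ≤ hitTime T S x := by
  have hx : x ∈ U T S 0 := by intro k hk0 hk; omega
  have h0 : ((0 : ℕ) : ℕ∞) < hitTime T S x := mem_U_iff.1 hx
  rw [Nat.cast_zero] at h0
  simpa using Order.add_one_le_of_lt h0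

lemma measurableSet_U {T : X → X} (hT : Measurable T) {S : Set X} (hS : MeasurableSet S) (m : ℕ) :
    MeasurableSet (U T S m) := by
  have : U T S m = ⋂ (k : ℕ) (_ : 0 < k) (_ : k ≤ m), (T^[k]) ⁻¹' Sᶜ := by
    ext x; simp [U, mem_iInter]
  rw [this]
  exact MeasurableSet.iInter fun k => MeasurableSet.iInter fun _ => MeasurableSet.iInter fun _ =>
    (hT.iterate k) hS.compl

lemma U_antitone {T : X → X} {S : Set X} : Antitone (U T S) := by
  intro m n hmn x hx k hk0 hkm
  exact hx k hk0 (hkm.trans hmn)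

lemma U_zero {T : X → X} {S : Set X} : U T S 0 = univ := by
  ext x; simp only [U, mem_setOf_eq, mem_univ, iff_true]
  intro k h0 h1; omega

lemma key_step {μ : Measure X} {T : X → X} (hTm : MeasurePreserving T μ μ)
    {S : Set X} (hS : MeasurableSet S) (m : ℕ) :
    μ (U T S m) = μ (U T S (m + 1)) + μ (S ∩ U T S m) := by
  have hTmeas : Measurable T := hTm.measurable
  have hsplit : T ⁻¹' (U T S m) = U T S (m + 1) ∪ T ⁻¹' (S ∩ U T S m) := by
    ext x
    simp only [mem_preimage, mem_union, U, mem_setOf_eq, mem_inter_iff]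
    constructor
    · intro h
      by_cases hx : T x ∈ S
      · right
        exact ⟨hx, h⟩
      · left
        intro k hk0 hk1
        match k, hk0 with
        | 1, _ => simpa using hx
        | (j+2), _ =>
          have h2 : T^[j+1] (T x) ∉ S := h (j+1) (by omega) (by omega)
          rw [← Function.iterate_succ_apply] at h2
          exact h2
    · rintro (h | ⟨hTx, h⟩) k hk0 hk1
      · have h2 : T^[k+1] x ∉ S := h (k+1) (by omega) (by omega)
        rw [Function.iterate_succ_apply] at h2
        exact h2
      · exact h k hk0 hk1
  have hdisj : Disjoint (U T S (m + 1)) (T ⁻¹' (S ∩ U T S m)) := by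
    rw [Set.disjoint_left]
    intro x hx hx'
    have h1 : T^[1] x ∉ S := hx 1 (by omega) (by omega)
    simp only [mem_preimage, mem_inter_iff] at hx'
    exact h1 (by simpa using hx'.1)
  have hUm : MeasurableSet (U T S (m+1)) := measurableSet_U hTmeas hS (m+1)
  have hSm : MeasurableSet (S ∩ U T S m) := hS.inter (measurableSet_U hTmeas hS m)
  calc μ (U T S m) = μ (T ⁻¹' (U T S m)) :=
        (hTm.measure_preimage (measurableSet_U hTmeas hS m).nullMeasurableSet).symm
    _ = μ (U T S (m + 1) ∪ T ⁻¹' (S ∩ U T S m)) := by rw [hsplit]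
    _ = μ (U T S (m + 1)) + μ (T ⁻¹' (S ∩ U T S m)) :=
        measure_union hdisj (hTmeas hSm)
    _ = μ (U T S (m + 1)) + μ (S ∩ U T S m) := by
        rw [hTm.measure_preimage hSm.nullMeasurableSet]

lemma sum_eq {μ : Measure X} {T : X → X} (hTm : MeasurePreserving T μ μ)
    {S : Set X} (hS : MeasurableSet S) (m : ℕ) :
    μ (univ : Set X) = μ (U T S m) + ∑ k ∈ Finset.range m, μ (S ∩ U T S k) := by
  induction m with
  | zero => simp [U_zero]
  | succ n ih =>
      rw [ih, key_step hTm hS n, Finset.sum_range_succ]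
      ring

lemma main_bound {μ : Measure X} [IsFiniteMeasure μ] {T : X → X}
    (hTm : MeasurePreserving T μ μ) {S : Set X} (hS : MeasurableSet S) (m : ℕ) :
    (m : ℝ≥0∞) * μ (S ∩ U T S m) ≤ μ ((U T S m)ᶜ) := by
  have h1 : ∀ k ∈ Finset.range m, μ (S ∩ U T S m) ≤ μ (S ∩ U T S k) := by
    intro k hk
    exact measure_mono (inter_subset_inter_right _ (U_antitone (Finset.mem_range.1 hk).le))
  calc (m : ℝ≥0∞) * μ (S ∩ U T S m)
      = ∑ _k ∈ Finset.range m, μ (S ∩ U T S m) := by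
        simp [Finset.sum_const, nsmul_eq_mul]
    _ ≤ ∑ k ∈ Finset.range m, μ (S ∩ U T S k) := Finset.sum_le_sum h1
    _ = μ ((U T S m)ᶜ) := by
        have h2 : μ (U T S m) + ∑ k ∈ Finset.range m, μ (S ∩ U T S k)
            = μ (U T S m) + μ ((U T S m)ᶜ) := by
          rw [← sum_eq hTm hS m, measure_add_measure_compl (measurableSet_U hTm.measurable hS m)]
        exact (ENNReal.add_right_inj (measure_ne_top μ _)).1 h2

end TRTS

section Part2

open Filter MeasureTheory Set Topology ENNReal

namespace TRTS

lemma ereal_mul_lt_of_lt_div {a : EReal} {c q : ℝ} (hc : 0 < c)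
    (h : (q : EReal) < a / (c : EReal)) : ((q * c : ℝ) : EReal) < a := by
  by_contra h'
  push_neg at h'
  have h2 : a / (c : EReal) ≤ ((q * c : ℝ) : EReal) / (c : EReal) :=
    EReal.div_le_div_right_of_nonneg (by exact_mod_cast hc.le) h'
  have h3 : ((q * c : ℝ) : EReal) / (c : EReal) = (q : EReal) := by
    rw [← EReal.coe_div, mul_div_cancel_right₀ q hc.ne']
  rw [h3] at h2
  exact absurd (h.trans_le h2) (lt_irrefl _)

lemma ereal_mul_lt_of_div_lt {a : EReal} {c q : ℝ} (hc : c < 0)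
    (h : a / (c : EReal) < (q : EReal)) : ((q * c : ℝ) : EReal) < a := by
  by_contra h'
  push_neg at h'
  have h2 : ((q * c : ℝ) : EReal) / (c : EReal) ≤ a / (c : EReal) :=
    EReal.div_le_div_right_of_nonpos (by exact_mod_cast hc.le) h'
  have h3 : ((q * c : ℝ) : EReal) / (c : EReal) = (q : EReal) := by
    rw [← EReal.coe_div, mul_div_cancel_right₀ q hc.ne]
  rw [h3] at h2
  exact absurd (h2.trans_lt h) (lt_irrefl _)

/-- If `log x > y` (with `y : ℝ`) then `x > ofReal (exp y)`. -/
lemma ofReal_exp_lt_of_lt_log {x : ℝ≥0∞} {y : ℝ} (h : (y : EReal) < ENNReal.log x) :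
    ENNReal.ofReal (Real.exp y) < x := by
  rw [← ENNReal.log_lt_log_iff, ENNReal.log_ofReal_of_pos (Real.exp_pos y), Real.log_exp]
  exact h

lemma aux_tendsto_div {g d : ℝ → ℝ} {M : ℝ} (hb : ∀ᶠ r in 𝓝[>] (0:ℝ), |g r| ≤ M)
    (hd : Tendsto (fun r => |d r|) (𝓝[>] (0:ℝ)) atTop) :
    Tendsto (fun r => ((g r : ℝ) : EReal) / ((d r : ℝ) : EReal)) (𝓝[>] (0:ℝ)) (𝓝 0) := by
  have hreal : Tendsto (fun r => g r / d r) (𝓝[>] (0:ℝ)) (𝓝 0) := by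
    apply squeeze_zero_norm' (a := fun r => M / |d r|)
    · filter_upwards [hb, hd.eventually_gt_atTop 0] with r h1 h2
      rw [Real.norm_eq_abs, abs_div]
      gcongr
    · exact Tendsto.div_atTop tendsto_const_nhds hd
  have heq : (fun r => ((g r : ℝ) : EReal) / ((d r : ℝ) : EReal))
      = fun r => ((g r / d r : ℝ) : EReal) := by
    funext r; rw [EReal.coe_div]
  rw [heq, show (0 : EReal) = ((0:ℝ) : EReal) from rfl]
  exact EReal.tendsto_coe.2 hreal

end TRTS

end Part2

section Part3

open Filter MeasureTheory Set Topology ENNReal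

namespace TRTS

variable {X : Type*} [MeasurableSpace X]

lemma eventually_rpow_lt {t' q₁ q₂ : ℝ} (ht' : 0 < t') (hq : q₁ < q₂) :
    ∀ᶠ r in 𝓝[>] (0:ℝ), t' * r ^ (-q₁) < r ^ (-q₂) := by
  have h1 : Tendsto (fun r : ℝ => r ^ (q₁ - q₂)) (𝓝[>] (0:ℝ)) atTop := by
    have h2 : Tendsto (fun r : ℝ => (r⁻¹) ^ (q₂ - q₁)) (𝓝[>] (0:ℝ)) atTop :=
      (tendsto_rpow_atTop (by linarith)).comp tendsto_inv_nhdsGT_zero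
    apply h2.congr'
    filter_upwards [self_mem_nhdsWithin] with r (hr : 0 < r)
    rw [Real.inv_rpow hr.le, ← Real.rpow_neg hr.le, neg_sub]
  filter_upwards [h1.eventually_gt_atTop t', self_mem_nhdsWithin] with r h2 (hr : 0 < r)
  have h3 : t' * r ^ (-q₁) < r ^ (q₁ - q₂) * r ^ (-q₁) :=
    mul_lt_mul_of_pos_right h2 (Real.rpow_pos_of_pos hr _)
  calc t' * r ^ (-q₁) < r ^ (q₁ - q₂) * r ^ (-q₁) := h3
    _ = r ^ (-q₂) := by rw [← Real.rpow_add hr]; ring_nf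

lemma eventually_hitTime_gt (μ : Measure X) [IsFiniteMeasure μ] (T : X → X) (f : X → ℝ)
    (hpos : ∀ r : ℝ, 0 < r → 0 < μ {x | f x ≤ r}) {x : X} {t' : ℝ} (ht' : 0 < t')
    (hx : limsup (fun r : ℝ =>
          ENNReal.log (μ {y | f y ≤ r}) / ((Real.log r : ℝ) : EReal)) (𝓝[>] 0)
        < liminf (fun r : ℝ =>
          ENNReal.log ((hitTime T {y | f y ≤ r} x : ℝ≥0∞)) / ((- Real.log r : ℝ) : EReal))
          (𝓝[>] 0)) :
    ∀ᶠ r in 𝓝[>] (0:ℝ),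
      ENNReal.ofReal (t' / (μ {y | f y ≤ r}).toReal) < (hitTime T {y | f y ≤ r} x : ℝ≥0∞) := by
  obtain ⟨q₂, hLq₂, hq₂⟩ := EReal.exists_between_coe_real hx
  obtain ⟨q₁, hLq₁, hq₁q₂'⟩ := EReal.exists_between_coe_real hLq₂
  have hq₁q₂ : q₁ < q₂ := by exact_mod_cast hq₁q₂'
  have hev1 := eventually_lt_of_limsup_lt hLq₁
  have hev2 := eventually_lt_of_lt_liminf hq₂
  have hev3 : ∀ᶠ r in 𝓝[>] (0:ℝ), 0 < r ∧ r < 1 := by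
    filter_upwards [Ioo_mem_nhdsGT_of_mem (⟨le_rfl, one_pos⟩ : (0:ℝ) ∈ Ico 0 1)] with r hr
    exact ⟨hr.1, hr.2⟩
  filter_upwards [hev1, hev2, hev3, eventually_rpow_lt ht' hq₁q₂] with r h1 h2 ⟨hr0, hr1⟩ h4
  have hlogr : Real.log r < 0 := Real.log_neg hr0 hr1
  set μS := μ {y | f y ≤ r} with hμS
  have hμS0 : μS ≠ 0 := (hpos r hr0).ne'
  have hμStop : μS ≠ ⊤ := measure_ne_top μ _
  have hs : 0 < μS.toReal := ENNReal.toReal_pos hμS0 hμStop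
  -- lower bound on the measure: r ^ q₁ < μS.toReal
  have hm1 : ((q₁ * Real.log r : ℝ) : EReal) < ENNReal.log μS :=
    ereal_mul_lt_of_div_lt hlogr h1
  have hm2 : ENNReal.ofReal (r ^ q₁) < μS := by
    have := ofReal_exp_lt_of_lt_log hm1
    rwa [Real.rpow_def_of_pos hr0, mul_comm]
  have hm3 : r ^ q₁ < μS.toReal := by
    have := (ENNReal.toReal_lt_toReal (by simp) hμStop).2 hm2
    rwa [ENNReal.toReal_ofReal (Real.rpow_nonneg hr0.le q₁)] at this
  -- lower bound on the hitting time: ofReal (r ^ (-q₂)) < τ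
  have hneglogr : (0:ℝ) < - Real.log r := by linarith
  have ht1 : ((q₂ * - Real.log r : ℝ) : EReal)
      < ENNReal.log ((hitTime T {y | f y ≤ r} x : ℝ≥0∞)) :=
    ereal_mul_lt_of_lt_div hneglogr h2
  have ht2 : ENNReal.ofReal (r ^ (-q₂)) < (hitTime T {y | f y ≤ r} x : ℝ≥0∞) := by
    have := ofReal_exp_lt_of_lt_log ht1
    rwa [Real.rpow_def_of_pos hr0, show Real.log r * -q₂ = q₂ * - Real.log r by ring]
  -- combine
  have hchain : t' / μS.toReal < r ^ (-q₂) := by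
    calc t' / μS.toReal < t' / r ^ q₁ :=
          div_lt_div_of_pos_left ht' (Real.rpow_pos_of_pos hr0 _) hm3
      _ = t' * r ^ (-q₁) := by rw [Real.rpow_neg hr0.le, div_eq_mul_inv]
      _ < r ^ (-q₂) := h4
  calc ENNReal.ofReal (t' / μS.toReal) < ENNReal.ofReal (r ^ (-q₂)) :=
        (ENNReal.ofReal_lt_ofReal_iff (Real.rpow_pos_of_pos hr0 _)).2 hchain
    _ < _ := ht2

end TRTS

end Part3

open TRTS

/-- If `(X,T,μ)` is ergodic with `μ` finite and nonatomic, and a.e.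
`liminf_{r→0} log τ(x,S_r)/(-log r) > limsup_{r→0} log μ(S_r)/log r` for the sublevel sets
`S_r = {x : f x ≤ r}`, then the return time statistics in the sets `S_r` is trivial:
for every `t > 0`, `lim_{r→0} μ({x ∈ S_r : τ(x,S_r) ≥ t/μ(S_r)})/μ(S_r) = 0`. -/
theorem trivial_return_time_statistics
    {X : Type*} [MeasurableSpace X] (μ : Measure X) [IsFiniteMeasure μ] [NullSingletonClass μ]
    (T : X → X) (hT : Ergodic T μ)
    (f : X → ℝ) (hf : Measurable f) (hf0 : ∀ x, 0 ≤ f x)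
    (hpos : ∀ r : ℝ, 0 < r → 0 < μ {x | f x ≤ r})
    (hgap : ∀ᵐ x ∂μ,
      limsup (fun r : ℝ =>
          ENNReal.log (μ {y | f y ≤ r}) / ((Real.log r : ℝ) : EReal)) (𝓝[>] 0)
        < liminf (fun r : ℝ =>
          ENNReal.log ((hitTime T {y | f y ≤ r} x : ℝ≥0∞)) / ((- Real.log r : ℝ) : EReal))
          (𝓝[>] 0)) :
    ∀ t : ℝ, 0 < t →
      Tendsto (fun r : ℝ =>
          (μ {x | x ∈ {y | f y ≤ r} ∧
              ENNReal.ofReal t / μ {y | f y ≤ r} ≤ (hitTime T {y | f y ≤ r} x : ℝ≥0∞)}).toReal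
            / (μ {y | f y ≤ r}).toReal)
        (𝓝[>] 0) (𝓝 0) := by
  intro t ht
  classical
  have hμX : μ ≠ 0 := by
    intro h0
    have := hpos 1 one_pos
    rw [h0] at this
    simp at this
  haveI : (ae μ).NeBot := ae_neBot.2 hμX
  have hTmeas : Measurable T := hT.toMeasurePreserving.measurable
  have hSm : ∀ r : ℝ, MeasurableSet {y | f y ≤ r} := fun r => hf measurableSet_Iic
  set S : ℝ → Set X := fun r => {y | f y ≤ r} with hSdef
  set sr : ℝ → ℝ := fun r => (μ (S r)).toReal with hsrdef
  by_cases hcase : ∃ r₀ : ℝ, 0 < r₀ ∧ sr r₀ ≤ t / 2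
  · -- main case
    obtain ⟨r₀, hr₀, hr₀small⟩ := hcase
    set m : ℝ → ℕ := fun r => ⌈t / sr r⌉₊ - 1 with hmdef
    -- basic facts for small r
    have hfacts : ∀ r : ℝ, 0 < r → sr r ≤ t / 2 →
        0 < sr r ∧ 1 ≤ m r ∧ (m r : ℝ) < t / sr r ∧ t / sr r / 2 ≤ (m r : ℝ) := by
      intro r hr0 hrs
      have hs : 0 < sr r := ENNReal.toReal_pos (hpos r hr0).ne' (measure_ne_top μ _)
      have hx2 : 2 ≤ t / sr r := by
        rw [le_div_iff₀ hs]; linarith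
      have hceil2 : 2 ≤ ⌈t / sr r⌉₊ := by
        have : (1 : ℝ) < t / sr r := by linarith
        have := Nat.lt_ceil.2 (by exact_mod_cast this : ((1:ℕ) : ℝ) < t / sr r)
        omega
      have hm1 : 1 ≤ m r := by simp only [hmdef]; omega
      have hmcast : (m r : ℝ) = (⌈t / sr r⌉₊ : ℝ) - 1 := by
        simp only [hmdef]
        rw [Nat.cast_sub (by omega)]
        simp
      have hmlt : (m r : ℝ) < t / sr r := by
        rw [hmcast]
        have := Nat.ceil_lt_add_one (by linarith : (0:ℝ) ≤ t / sr r)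
        linarith
      have hmge : t / sr r / 2 ≤ (m r : ℝ) := by
        rw [hmcast]
        have := Nat.le_ceil (t / sr r)
        linarith
      exact ⟨hs, hm1, hmlt, hmge⟩
    have hev₀ : ∀ᶠ r in 𝓝[>] (0:ℝ), 0 < r ∧ sr r ≤ t / 2 := by
      filter_upwards [Ioc_mem_nhdsGT_of_mem (⟨le_rfl, hr₀⟩ : (0:ℝ) ∈ Ico 0 r₀)] with r hr
      refine ⟨hr.1, le_trans ?_ hr₀small⟩
      exact ENNReal.toReal_mono (measure_ne_top μ _)
        (measure_mono fun y hy => le_trans hy hr.2)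
    -- the "short hitting time" sets
    set B : ℝ → Set X := fun r => (U T (S r) (m r))ᶜ with hBdef
    have hBmeas : ∀ r, MeasurableSet (B r) :=
      fun r => (measurableSet_U hTmeas (hSm r) (m r)).compl
    -- Step C : μ (B r) → 0
    have hstepC : Tendsto (fun r => (μ (B r)).toReal) (𝓝[>] (0:ℝ)) (𝓝 0) := by
      have key_ae : ∀ᵐ x ∂μ, ∀ᶠ r in 𝓝[>] (0:ℝ), x ∉ B r := by
        filter_upwards [hgap] with x hx
        filter_upwards [eventually_hitTime_gt μ T f hpos ht hx, hev₀] with r h1 ⟨hr0, hrs⟩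
        obtain ⟨hs, hm1, hmlt, hmge⟩ := hfacts r hr0 hrs
        simp only [hBdef, mem_compl_iff, not_not]
        rw [mem_U_iff]
        have hchain : ((m r : ℕ∞) : ℝ≥0∞) < (hitTime T (S r) x : ℝ≥0∞) := by
          calc ((m r : ℕ∞) : ℝ≥0∞) = ((m r : ℕ) : ℝ≥0∞) := ENat.toENNReal_coe _
            _ = ENNReal.ofReal ((m r : ℕ) : ℝ) := (ENNReal.ofReal_natCast _).symm
            _ ≤ ENNReal.ofReal (t / sr r) := ENNReal.ofReal_le_ofReal hmlt.le
            _ < _ := h1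
        exact ENat.toENNReal_lt.1 hchain
      rw [tendsto_iff_seq_tendsto]
      intro u hu
      have hInd : ∀ n : ℕ, ∫ x, (B (u n)).indicator (fun _ => (1:ℝ)) x ∂μ
          = (μ (B (u n))).toReal := fun n => integral_indicator_one (hBmeas (u n))
      have hDCT : Tendsto (fun n => ∫ x, (B (u n)).indicator (fun _ => (1:ℝ)) x ∂μ)
          atTop (𝓝 (∫ _x, (0:ℝ) ∂μ)) := by
        apply MeasureTheory.tendsto_integral_of_dominated_convergence (fun _ => (1:ℝ))
        · exact fun n => ((measurable_const.indicator (hBmeas (u n)))).aestronglyMeasurable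
        · exact integrable_const 1
        · intro n
          filter_upwards with x
          rw [norm_indicator_eq_indicator_norm]
          classical
          by_cases hxB : x ∈ B (u n) <;> simp [hxB]
        · filter_upwards [key_ae] with x hx
          have hev := hu.eventually hx
          apply Tendsto.congr' (f₁ := fun _ => (0:ℝ))
          · filter_upwards [hev] with n hn
            simp [Set.indicator_of_notMem hn]
          · exact tendsto_const_nhds
      rw [integral_zero] at hDCT
      exact (funext hInd ▸ hDCT : Tendsto (fun n => (μ (B (u n))).toReal) atTop (𝓝 0))
    -- Step B : eventual bound, then squeeze
    apply squeeze_zero'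
    · filter_upwards with r
      positivity
    · show ∀ᶠ r in 𝓝[>] (0:ℝ), _ ≤ (2 / t) * (μ (B r)).toReal
      filter_upwards [hev₀] with r ⟨hr0, hrs⟩
      obtain ⟨hs, hm1, hmlt, hmge⟩ := hfacts r hr0 hrs
      set A := {x | x ∈ S r ∧
          ENNReal.ofReal t / μ (S r) ≤ (hitTime T (S r) x : ℝ≥0∞)} with hAdef
      have hofReal : ENNReal.ofReal t / μ (S r) = ENNReal.ofReal (t / sr r) := by
        conv_lhs => rw [← ENNReal.ofReal_toReal (measure_ne_top μ (S r))]
        rw [← ENNReal.ofReal_div_of_pos hs]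
      have hA : A ⊆ S r ∩ U T (S r) (m r) := by
        rintro x ⟨hxS, hxτ⟩
        refine ⟨hxS, ?_⟩
        rw [mem_U_iff]
        by_contra hcon
        push_neg at hcon
        have h1 : (hitTime T (S r) x : ℝ≥0∞) ≤ ((m r : ℕ∞) : ℝ≥0∞) :=
          ENat.toENNReal_le.2 hcon
        rw [hofReal] at hxτ
        have h2 : ((m r : ℕ∞) : ℝ≥0∞) < ENNReal.ofReal (t / sr r) := by
          rw [ENat.toENNReal_coe, ← ENNReal.ofReal_natCast]
          exact (ENNReal.ofReal_lt_ofReal_iff (by linarith)).2 hmlt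
        exact absurd ((hxτ.trans h1).trans_lt h2) (lt_irrefl _)
      have hmain := main_bound hT.toMeasurePreserving (hSm r) (m r)
      have hμA : (m r : ℝ≥0∞) * μ A ≤ μ (B r) := by
        refine le_trans ?_ hmain
        exact mul_le_mul_right (measure_mono hA) _
      have hμAreal : (m r : ℝ) * (μ A).toReal ≤ (μ (B r)).toReal := by
        have h3 : ((m r : ℝ≥0∞) * μ A).toReal ≤ (μ (B r)).toReal :=
          ENNReal.toReal_mono (measure_ne_top μ _) hμA
        rwa [ENNReal.toReal_mul, ENNReal.toReal_natCast] at h3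
      -- now real arithmetic
      have hmpos : (0:ℝ) < m r := by exact_mod_cast hm1
      have hArith : (μ A).toReal / sr r ≤ (2 / t) * (μ (B r)).toReal := by
        have hAnn : 0 ≤ (μ A).toReal := ENNReal.toReal_nonneg
        have h4 : t / sr r / 2 * (μ A).toReal ≤ (m r : ℝ) * (μ A).toReal :=
          mul_le_mul_of_nonneg_right hmge hAnn
        have h5 : t / sr r / 2 * (μ A).toReal = (t / 2) * ((μ A).toReal / sr r) := by
          show t / sr r / 2 * (μ A).toReal = t / 2 * ((μ A).toReal / sr r)
          rw [div_div, div_mul_eq_mul_div, mul_div_assoc t, div_mul_eq_mul_div,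
            mul_comm (sr r) 2, ← div_div, mul_div_assoc]
          congr 1
          rw [div_div, div_div, mul_comm]
        have h6 : (t / 2) * ((μ A).toReal / sr r) ≤ (μ (B r)).toReal := by
          rw [← h5]; exact h4.trans hμAreal
        have hconst : (2 / t) * (t / 2) = 1 := by
          field_simp
        calc (μ A).toReal / sr r = (2 / t) * ((t / 2) * ((μ A).toReal / sr r)) := by
              rw [← mul_assoc, hconst, one_mul]
          _ ≤ (2 / t) * (μ (B r)).toReal := by
              apply mul_le_mul_of_nonneg_left h6
              positivity
      exact hArith
    · have := hstepC.const_mul (2 / t)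
      simpa using this
  · -- degenerate case : contradiction
    push_neg at hcase
    exfalso
    -- μ (S 0) > 0
    have hS0 : ENNReal.ofReal (t / 2) ≤ μ (S 0) := by
      have hmono : Antitone (fun k : ℕ => S (1 / (k + 1))) := by
        intro k l hkl y hy
        have hy' : f y ≤ 1 / ((l : ℝ) + 1) := hy
        show f y ≤ 1 / ((k : ℝ) + 1)
        refine le_trans hy' (one_div_le_one_div_of_le (by positivity) ?_)
        have : (k + 1 : ℕ) ≤ (l + 1 : ℕ) := Nat.add_le_add_right hkl 1
        exact_mod_cast this
      have hseq := tendsto_measure_iInter_atTop (s := fun k : ℕ => S (1 / ((k : ℝ) + 1)))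
        (fun k => (hSm (1 / ((k : ℝ) + 1))).nullMeasurableSet) hmono ⟨0, measure_ne_top μ _⟩
      have hiInter : (⋂ k : ℕ, S (1 / (k + 1))) = S 0 := by
        ext y
        simp only [mem_iInter, hSdef, mem_setOf_eq]
        constructor
        · intro h
          by_contra hy
          push_neg at hy
          obtain ⟨k, hk⟩ := exists_nat_one_div_lt hy
          exact absurd (h k) (not_le.2 (by exact_mod_cast hk))
        · intro h k
          refine h.trans ?_
          positivity
      rw [hiInter] at hseq
      refine ge_of_tendsto' hseq fun k => ?_
      exact ENNReal.ofReal_le_of_le_toReal (hcase (1 / (k + 1)) (by positivity)).le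
    have hS0pos : 0 < μ (S 0) := lt_of_lt_of_le (ENNReal.ofReal_pos.2 (by linarith)) hS0
    -- almost every point hits S 0
    set W : Set X := ⋃ n : ℕ, (T^[n + 1]) ⁻¹' (S 0) with hWdef
    have hWmeas : MeasurableSet W :=
      MeasurableSet.iUnion fun n => (hTmeas.iterate (n + 1)) (hSm 0)
    have hWpre : T ⁻¹' W ⊆ W := by
      intro x hx
      simp only [hWdef, mem_preimage, mem_iUnion] at hx ⊢
      obtain ⟨n, hn⟩ := hx
      refine ⟨n + 1, ?_⟩
      rw [← Function.iterate_succ_apply] at hn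
      exact hn
    have hW01 := hT.ae_empty_or_univ_of_preimage_ae_le' hWmeas.nullMeasurableSet
      (HasSubset.Subset.eventuallyLE hWpre) (measure_ne_top μ _)
    have hWae : ∀ᵐ x ∂μ, x ∈ W := by
      rcases hW01 with h | h
      · exfalso
        have h0 : μ W = 0 := by
          rw [← measure_empty (μ := μ)]
          exact measure_congr h
        have h1 : μ ((T^[1]) ⁻¹' (S 0)) ≤ μ W :=
          measure_mono (subset_iUnion (fun n : ℕ => (T^[n + 1]) ⁻¹' (S 0)) 0)
        rw [(hT.toMeasurePreserving.iterate 1).measure_preimage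
          (hSm 0).nullMeasurableSet] at h1
        rw [h0] at h1
        exact absurd (le_antisymm h1 zero_le) hS0pos.ne'
      · rw [ae_iff]
        have hcompl : Wᶜ =ᵐ[μ] (univ : Set X)ᶜ := h.compl
        have h2 : μ Wᶜ = μ ((univ : Set X)ᶜ) := measure_congr hcompl
        rw [compl_univ, measure_empty] at h2
        exact h2
    -- pick a point witnessing both hgap and hitting
    obtain ⟨x, hx, hxW⟩ := (hgap.and hWae).exists
    obtain ⟨n, hn⟩ := mem_iUnion.1 hxW
    -- uniform bound on hitting times
    have hτle : ∀ r : ℝ, 0 < r → hitTime T (S r) x ≤ ((n + 1 : ℕ) : ℕ∞) := by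
      intro r hr
      apply hitTime_le_nat_iff.2
      exact ⟨n + 1, by omega, le_rfl, le_trans hn hr.le⟩
    -- the limsup is 0
    have hlimsup : Tendsto (fun r : ℝ =>
        ENNReal.log (μ (S r)) / ((Real.log r : ℝ) : EReal)) (𝓝[>] 0) (𝓝 0) := by
      have hM : ∀ᶠ r in 𝓝[>] (0:ℝ),
          |Real.log (sr r)| ≤ max |Real.log (t / 2)| |Real.log (μ univ).toReal| := by
        filter_upwards [self_mem_nhdsWithin] with r (hr : 0 < r)
        have h1 : t / 2 < sr r := hcase r hr
        have h2 : sr r ≤ (μ univ).toReal :=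
          ENNReal.toReal_mono (measure_ne_top μ _) (measure_mono (subset_univ _))
        rw [abs_le]
        constructor
        · calc -(max |Real.log (t / 2)| |Real.log (μ univ).toReal|)
              ≤ -|Real.log (t / 2)| := by
                simp only [neg_le_neg_iff]
                exact le_max_left _ _
            _ ≤ Real.log (t / 2) := neg_abs_le _
            _ ≤ Real.log (sr r) := Real.log_le_log (by linarith) h1.le
        · calc Real.log (sr r) ≤ Real.log (μ univ).toReal :=
                Real.log_le_log (by linarith) h2
            _ ≤ |Real.log (μ univ).toReal| := le_abs_self _
            _ ≤ _ := le_max_right _ _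
      have hd : Tendsto (fun r : ℝ => |Real.log r|) (𝓝[>] (0:ℝ)) atTop :=
        tendsto_abs_atBot_atTop.comp Real.tendsto_log_nhdsGT_zero
      have := aux_tendsto_div hM hd
      apply this.congr'
      filter_upwards [self_mem_nhdsWithin] with r (hr : 0 < r)
      rw [ENNReal.log_pos_real' (ENNReal.toReal_pos (hpos r hr).ne' (measure_ne_top μ _))]
    -- the liminf is 0
    have hliminf : Tendsto (fun r : ℝ =>
        ENNReal.log ((hitTime T (S r) x : ℝ≥0∞)) / ((- Real.log r : ℝ) : EReal))
        (𝓝[>] 0) (𝓝 0) := by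
      have hτbd : ∀ r : ℝ, 0 < r →
          1 ≤ ((hitTime T (S r) x : ℝ≥0∞)).toReal ∧
          ((hitTime T (S r) x : ℝ≥0∞)).toReal ≤ (n : ℝ) + 1 := by
        intro r hr
        have hle : (hitTime T (S r) x : ℝ≥0∞) ≤ ((n + 1 : ℕ) : ℝ≥0∞) := by
          rw [← ENat.toENNReal_coe]
          exact ENat.toENNReal_le.2 (hτle r hr)
        have hge : (1 : ℝ≥0∞) ≤ (hitTime T (S r) x : ℝ≥0∞) := by
          rw [← ENat.toENNReal_one]
          exact ENat.toENNReal_le.2 one_le_hitTime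
        have hne : (hitTime T (S r) x : ℝ≥0∞) ≠ ⊤ :=
          (lt_of_le_of_lt hle (by simp [ENNReal.natCast_lt_top])).ne
        constructor
        · have := ENNReal.toReal_mono hne hge
          simpa using this
        · have := ENNReal.toReal_mono (by simp) hle
          rw [ENNReal.toReal_natCast] at this
          push_cast at this
          linarith
      have hM : ∀ᶠ r in 𝓝[>] (0:ℝ),
          |Real.log ((hitTime T (S r) x : ℝ≥0∞)).toReal| ≤ Real.log ((n : ℝ) + 1) := by
        filter_upwards [self_mem_nhdsWithin] with r (hr : 0 < r)
        obtain ⟨h1, h2⟩ := hτbd r hr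
        rw [abs_of_nonneg (Real.log_nonneg h1)]
        exact Real.log_le_log (by linarith) h2
      have hd : Tendsto (fun r : ℝ => |(- Real.log r)|) (𝓝[>] (0:ℝ)) atTop := by
        have hd0 : Tendsto (fun r : ℝ => |Real.log r|) (𝓝[>] (0:ℝ)) atTop :=
          tendsto_abs_atBot_atTop.comp Real.tendsto_log_nhdsGT_zero
        exact hd0.congr fun r => (abs_neg _).symm
      have := aux_tendsto_div hM hd
      apply this.congr'
      filter_upwards [self_mem_nhdsWithin] with r (hr : 0 < r)
      obtain ⟨h1, _⟩ := hτbd r hr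
      rw [ENNReal.log_pos_real' (by linarith)]
    rw [hlimsup.limsup_eq, hliminf.liminf_eq] at hx
    exact lt_irrefl _ hx
end
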